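/- arXiv:1103.1034 — 4 statements merged into one kernel-verified Lean document; each statement's English description precedes it below -/
import Mathlib

section
/- Let f belong to W¹[−1,1] with constant M₁, and set L = (4γM₁/π)·(1 + π√2/(2γ·ln N)) and L₁ = M₁γ/(2π). Then for every z ∈ ℂ with |Re z| > 1, the remainder R*_N(f,z) = Φ(f − S_N, z) satisfies |R*_N(f,z)| ≤ √((L·ln N)² + L₁²)/N. -/
open Real MeasureTheory Filter Topology

open intervalIntegral

lemma le_of_sq_le' {a b : ℝ} (ha : 0 ≤ a) (hb : 0 ≤ b) (h : a^2 ≤ b^2) : a ≤ b := by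
  nlinarith

lemma int_m1 : (∫ u in (-1:ℝ)..0, (1+u) ^ (-(1:ℝ)/2)) = 2 := by
  have h := intervalIntegral.integral_comp_add_left (a := (-1:ℝ)) (b := 0)
    (fun s : ℝ => s ^ (-(1:ℝ)/2)) 1
  rw [h, show (1:ℝ) + -1 = 0 by norm_num, show (1:ℝ) + 0 = 1 by norm_num,
    integral_rpow (Or.inl (by norm_num))]
  rw [Real.one_rpow, Real.zero_rpow (by norm_num)]
  norm_num

lemma int_p4 : (∫ u in (0:ℝ)..1, (1-u) ^ (-(1:ℝ)/2)) = 2 := by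
  have h := intervalIntegral.integral_comp_sub_left (a := (0:ℝ)) (b := 1)
    (fun s : ℝ => s ^ (-(1:ℝ)/2)) 1
  rw [h, show (1:ℝ) - 1 = 0 by norm_num, show (1:ℝ) - 0 = 1 by norm_num,
    integral_rpow (Or.inl (by norm_num))]
  rw [Real.one_rpow, Real.zero_rpow (by norm_num)]
  norm_num

lemma int_p2 {d : ℝ} (hd : 0 < d) (hd1 : d ≤ 1) :
    (∫ u in (0:ℝ)..(1-d), (1-u) ^ (-(3:ℝ)/2)) = 2 / Real.sqrt d - 2 := by
  have h := intervalIntegral.integral_comp_sub_left (a := (0:ℝ)) (b := 1-d)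
    (fun s : ℝ => s ^ (-(3:ℝ)/2)) 1
  rw [h, show (1:ℝ) - (1-d) = d by ring, show (1:ℝ) - 0 = 1 by norm_num,
    integral_rpow (Or.inr ⟨by norm_num, by
      rw [Set.uIcc_of_le hd1]
      simp only [Set.mem_Icc, not_and_or, not_le]
      left; exact hd⟩)]
  rw [show (-(3:ℝ)/2 + 1) = -(1/2) by norm_num, Real.one_rpow,
    Real.rpow_neg hd.le, ← Real.sqrt_eq_rpow]
  have hsd : Real.sqrt d ≠ 0 := ne_of_gt (Real.sqrt_pos.mpr hd)
  field_simp
  ring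

lemma int_p3 {d : ℝ} (hd : 0 ≤ d) :
    (∫ u in (1-d:ℝ)..1, (1-u) ^ (-(1:ℝ)/2)) = 2 * Real.sqrt d := by
  have h := intervalIntegral.integral_comp_sub_left (a := (1-d:ℝ)) (b := 1)
    (fun s : ℝ => s ^ (-(1:ℝ)/2)) 1
  rw [h, show (1:ℝ) - 1 = 0 by norm_num, show (1:ℝ) - (1-d) = d by ring,
    integral_rpow (Or.inl (by norm_num))]
  rw [Real.zero_rpow (by norm_num), show (-(1:ℝ)/2 + 1) = (1/2 : ℝ) by norm_num,
    ← Real.sqrt_eq_rpow]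
  norm_num
  ring

lemma piece_bound {F : ℝ → ℂ} {a b : ℝ} (hab : a ≤ b) {g : ℝ → ℝ} {v : ℝ}
    (hpt : ∀ u ∈ Set.Ioc a b, ‖F u‖ ≤ g u) (hg : IntervalIntegrable g volume a b)
    (hv : (∫ u in a..b, g u) = v) (hv0 : 0 ≤ v) :
    ‖∫ u in a..b, F u‖ ≤ v := by
  have h := intervalIntegral.norm_integral_le_abs_of_norm_le
    ((ae_restrict_iff' measurableSet_uIoc).mpr (Filter.Eventually.of_forall
      (fun u hu => hpt u (by rwa [Set.uIoc_of_le hab] at hu)))) hg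
  rwa [hv, abs_of_nonneg hv0] at h

lemma hrw_sqrt {s : ℝ} (hs : 0 < s) : s ^ (-(1:ℝ)/2) = (Real.sqrt s)⁻¹ := by
  rw [show (-(1:ℝ)/2) = -(1/2:ℝ) by norm_num, Real.rpow_neg hs.le, ← Real.sqrt_eq_rpow]

set_option maxHeartbeats 1000000 in
lemma core_bound (c : ℝ) (G : ℝ → ℂ)
    (hG : ∀ u ∈ Set.Icc (-1:ℝ) 1, ‖G u‖ ≤ c)
    (z : ℂ) (hz : 1 < z.re) :
    Real.sqrt (‖z - 1‖ * ‖z + 1‖) *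
      ‖∫ u in (-1:ℝ)..1,
        G u / ((Real.sqrt (1 - u ^ 2) : ℂ) * ((u : ℂ) - z))‖ ≤ 8 * c := by
  classical
  have hc : 0 ≤ c := le_trans (norm_nonneg _) (hG 0 ⟨by norm_num, by norm_num⟩)
  set d := ‖z - 1‖ with hd_def
  set e := ‖z + 1‖ with he_def
  set F : ℝ → ℂ := fun u => G u / ((Real.sqrt (1 - u ^ 2) : ℂ) * ((u : ℂ) - z)) with hF_def
  have hd0 : 0 < d := by
    rw [hd_def]
    apply norm_pos_iff.mpr
    intro h
    rw [sub_eq_zero] at h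
    rw [h] at hz
    simp at hz
  have habs_sq : ∀ u : ℝ, (‖(u:ℂ) - z‖)^2 = (u - z.re)^2 + z.im^2 := by
    intro u
    rw [Complex.sq_norm, Complex.normSq_apply]
    simp [Complex.sub_re, Complex.sub_im]
    ring
  have hd2 : d^2 = (z.re - 1)^2 + z.im^2 := by
    rw [hd_def, Complex.sq_norm, Complex.normSq_apply]
    simp [Complex.sub_re, Complex.sub_im]
    ring
  have he2 : e^2 = (z.re + 1)^2 + z.im^2 := by
    rw [he_def, Complex.sq_norm, Complex.normSq_apply]
    simp [Complex.add_re, Complex.add_im]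
    ring
  have he : 2 < e := by
    have := Complex.re_le_norm (z + 1)
    rw [Complex.add_re, Complex.one_re] at this
    linarith
  have hde : d ≤ e := by
    apply le_of_sq_le' hd0.le (by linarith)
    rw [hd2, he2]; nlinarith
  have hed : e ≤ d + 2 := by
    have h := norm_add_le (z - 1) 2
    rw [show z - 1 + 2 = z + 1 by ring, Complex.norm_two] at h
    exact h
  -- kernel lower bounds
  have hker_d : ∀ u : ℝ, u ≤ 1 → d ≤ ‖(u:ℂ) - z‖ := by
    intro u hu
    apply le_of_sq_le' hd0.le (norm_nonneg _)
    rw [habs_sq, hd2]; nlinarith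
  have hker_1u : ∀ u : ℝ, u ≤ 1 → 1 - u ≤ ‖(u:ℂ) - z‖ := by
    intro u hu
    rcases le_or_gt (1 - u) 0 with h | h
    · exact le_trans h (norm_nonneg _)
    · apply le_of_sq_le' h.le (norm_nonneg _)
      rw [habs_sq]; nlinarith
  have hker_e : ∀ u : ℝ, u ≤ 0 → e / 2 ≤ ‖(u:ℂ) - z‖ := by
    intro u hu
    apply le_of_sq_le' (by linarith) (norm_nonneg _)
    rw [div_pow, habs_sq, he2]; nlinarith
  -- generic pointwise bound
  have hFb : ∀ u ∈ Set.Icc (-1:ℝ) 1, ∀ A B : ℝ, 0 < A → 0 < B →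
      A ≤ Real.sqrt (1 - u^2) → B ≤ ‖(u:ℂ) - z‖ →
      ‖F u‖ ≤ c / (A * B) := by
    intro u hu A B hA hB hAle hBle
    have : ‖F u‖ = ‖G u‖ /
        (Real.sqrt (1 - u^2) * ‖(u:ℂ) - z‖) := by
      rw [hF_def]
      simp only [norm_div, norm_mul, Complex.norm_real, Real.norm_eq_abs,
        abs_of_nonneg (Real.sqrt_nonneg _)]
    rw [this]
    apply div_le_div₀ hc (hG u hu) (by positivity)
    exact mul_le_mul hAle hBle hB.le (Real.sqrt_nonneg _)
  by_cases hInt : IntervalIntegrable F volume (-1) 1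
  swap
  · rw [intervalIntegral.integral_undef hInt]
    simp only [norm_zero, mul_zero]
    positivity
  -- split the integral
  have hsub1 : Set.uIcc (-1:ℝ) 0 ⊆ Set.uIcc (-1:ℝ) 1 := by
    rw [Set.uIcc_of_le (by norm_num : (-1:ℝ) ≤ 0), Set.uIcc_of_le (by norm_num : (-1:ℝ) ≤ 1)]
    exact Set.Icc_subset_Icc le_rfl (by norm_num)
  have hsub2 : Set.uIcc (0:ℝ) 1 ⊆ Set.uIcc (-1:ℝ) 1 := by
    rw [Set.uIcc_of_le (by norm_num : (0:ℝ) ≤ 1), Set.uIcc_of_le (by norm_num : (-1:ℝ) ≤ 1)]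
    exact Set.Icc_subset_Icc (by norm_num) le_rfl
  have hInt_m : IntervalIntegrable F volume (-1) 0 := hInt.mono_set hsub1
  have hInt_p : IntervalIntegrable F volume 0 1 := hInt.mono_set hsub2
  have hsplit : (∫ u in (-1:ℝ)..1, F u) = (∫ u in (-1:ℝ)..0, F u) + ∫ u in (0:ℝ)..1, F u :=
    (intervalIntegral.integral_add_adjacent_intervals hInt_m hInt_p).symm
  -- minus piece
  have hm_bound : ‖∫ u in (-1:ℝ)..0, F u‖ ≤ 2 * c / e * 2 := by
    apply piece_bound (by norm_num : (-1:ℝ) ≤ 0)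
      (g := fun u => 2 * c / e * (1 + u) ^ (-(1:ℝ)/2))
    · intro u hu
      have h1 : 0 < 1 + u := by linarith [hu.1]
      have hb := hFb u ⟨hu.1.le, by linarith [hu.2]⟩ (Real.sqrt (1 + u)) (e / 2)
        (Real.sqrt_pos.mpr h1) (by linarith)
        (Real.sqrt_le_sqrt (by nlinarith [hu.1, hu.2]))
        (hker_e u hu.2)
      have heq : c / (Real.sqrt (1 + u) * (e / 2)) = 2 * c / e * (1 + u) ^ (-(1:ℝ)/2) := by
        rw [hrw_sqrt h1]
        have hs : Real.sqrt (1 + u) ≠ 0 := ne_of_gt (Real.sqrt_pos.mpr h1)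
        field_simp
      linarith [hb, heq.le]
    · exact IntervalIntegrable.const_mul (by
        have h := (intervalIntegrable_rpow' (a := 0) (b := 1)
          (by norm_num : (-1:ℝ) < -(1:ℝ)/2)).comp_add_left 1
        rw [show (0:ℝ) - 1 = -1 by norm_num, show (1:ℝ) - 1 = 0 by norm_num] at h
        exact h) _
    · rw [intervalIntegral.integral_const_mul, int_m1]
    · positivity
  -- endpoint value
  have hF1 : ‖F 1‖ = 0 := by
    rw [hF_def]
    norm_num
  rcases le_or_gt d 1 with hd1 | hd1
  · -- case d ≤ 1 : split plus piece at 1 - d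
    have hsub3 : Set.uIcc (0:ℝ) (1-d) ⊆ Set.uIcc (0:ℝ) 1 := by
      rw [Set.uIcc_of_le (by linarith : (0:ℝ) ≤ 1-d), Set.uIcc_of_le (by norm_num : (0:ℝ) ≤ 1)]
      exact Set.Icc_subset_Icc le_rfl (by linarith)
    have hsub4 : Set.uIcc (1-d:ℝ) 1 ⊆ Set.uIcc (0:ℝ) 1 := by
      rw [Set.uIcc_of_le (by linarith : (1-d:ℝ) ≤ 1), Set.uIcc_of_le (by norm_num : (0:ℝ) ≤ 1)]
      exact Set.Icc_subset_Icc (by linarith) le_rfl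
    have hsplit2 : (∫ u in (0:ℝ)..1, F u) =
        (∫ u in (0:ℝ)..(1-d), F u) + ∫ u in (1-d:ℝ)..1, F u :=
      (intervalIntegral.integral_add_adjacent_intervals
        (hInt_p.mono_set hsub3) (hInt_p.mono_set hsub4)).symm
    have hp1_bound : ‖∫ u in (0:ℝ)..(1-d), F u‖ ≤ c * (2 / Real.sqrt d - 2) := by
      apply piece_bound (by linarith : (0:ℝ) ≤ 1-d)
        (g := fun u => c * (1 - u) ^ (-(3:ℝ)/2))
      · intro u hu
        have h1 : 0 < 1 - u := by linarith [hu.2, hd0]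
        have hb := hFb u ⟨by linarith [hu.1], by linarith⟩ (Real.sqrt (1 - u)) (1 - u)
          (Real.sqrt_pos.mpr h1) h1
          (Real.sqrt_le_sqrt (by nlinarith [hu.1, hu.2, hd0]))
          (hker_1u u (by linarith))
        have heq : c / (Real.sqrt (1 - u) * (1 - u)) = c * (1 - u) ^ (-(3:ℝ)/2) := by
          rw [show (-(3:ℝ)/2) = (-(1:ℝ)/2) + (-1 : ℝ) by norm_num, Real.rpow_add h1,
            hrw_sqrt h1, Real.rpow_neg_one]
          have hs : Real.sqrt (1 - u) ≠ 0 := ne_of_gt (Real.sqrt_pos.mpr h1)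
          rw [Real.sqrt_eq_rpow] at hs ⊢
          field_simp
        linarith [hb, heq.le]
      · exact IntervalIntegrable.const_mul (by
          have h := (intervalIntegrable_rpow (μ := volume) (r := -(3:ℝ)/2) (a := d) (b := 1)
            (Or.inr (by
              rw [Set.uIcc_of_le hd1]
              simp only [Set.mem_Icc, not_and_or, not_le]
              left; exact hd0))).comp_sub_left 1
          rw [show (1:ℝ) - 1 = 0 by norm_num] at h
          exact h.symm) _
      · rw [intervalIntegral.integral_const_mul, int_p2 hd0 hd1]
      · have h3 : 0 < Real.sqrt d := Real.sqrt_pos.mpr hd0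
        have h2 : Real.sqrt d ≤ 1 := by
          rw [show (1:ℝ) = Real.sqrt 1 by simp]
          exact Real.sqrt_le_sqrt hd1
        have h4 : (2:ℝ) ≤ 2 / Real.sqrt d := by
          rw [le_div_iff₀ h3]; linarith
        exact mul_nonneg hc (by linarith)
    have hp2_bound : ‖∫ u in (1-d:ℝ)..1, F u‖ ≤ c / d * (2 * Real.sqrt d) := by
      apply piece_bound (by linarith : (1-d:ℝ) ≤ 1)
        (g := fun u => c / d * (1 - u) ^ (-(1:ℝ)/2))
      · intro u hu
        rcases eq_or_lt_of_le hu.2 with h | h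
        · rw [h, hF1]
          rw [show (1:ℝ) - 1 = 0 by norm_num, Real.zero_rpow (by norm_num)]
          simp
        · have h1 : 0 < 1 - u := by linarith
          have hb := hFb u ⟨by linarith [hu.1], hu.2⟩ (Real.sqrt (1 - u)) d
            (Real.sqrt_pos.mpr h1) hd0
            (Real.sqrt_le_sqrt (by nlinarith [hu.1, hd1, h]))
            (hker_d u hu.2)
          have heq : c / (Real.sqrt (1 - u) * d) = c / d * (1 - u) ^ (-(1:ℝ)/2) := by
            rw [hrw_sqrt h1]
            have hs : Real.sqrt (1 - u) ≠ 0 := ne_of_gt (Real.sqrt_pos.mpr h1)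
            have hdne : d ≠ 0 := ne_of_gt hd0
            field_simp
          linarith [hb, heq.le]
      · exact IntervalIntegrable.const_mul (by
          have h := (intervalIntegrable_rpow' (a := 0) (b := d)
            (by norm_num : (-1:ℝ) < -(1:ℝ)/2)).comp_sub_left 1
          rw [show (1:ℝ) - 0 = 1 by norm_num] at h
          exact h.symm) _
      · rw [intervalIntegral.integral_const_mul, int_p3 hd0.le]
      · positivity
    -- assemble
    have htot : ‖∫ u in (-1:ℝ)..1, F u‖ ≤
        2 * c / e * 2 + (c * (2 / Real.sqrt d - 2) + c / d * (2 * Real.sqrt d)) := by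
      rw [hsplit, hsplit2]
      calc ‖(∫ u in (-1:ℝ)..0, F u) +
            ((∫ u in (0:ℝ)..(1-d), F u) + ∫ u in (1-d:ℝ)..1, F u)‖
          ≤ ‖∫ u in (-1:ℝ)..0, F u‖ +
            ‖(∫ u in (0:ℝ)..(1-d), F u) + ∫ u in (1-d:ℝ)..1, F u‖ :=
            norm_add_le _ _
        _ ≤ ‖∫ u in (-1:ℝ)..0, F u‖ +
            (‖∫ u in (0:ℝ)..(1-d), F u‖ +
              ‖∫ u in (1-d:ℝ)..1, F u‖) := by
            gcongr
            exact norm_add_le _ _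
        _ ≤ _ := by gcongr
    -- final arithmetic, case d ≤ 1
    set p := Real.sqrt d with hp_def
    set q := Real.sqrt e with hq_def
    have hp0 : 0 < p := Real.sqrt_pos.mpr hd0
    have hq0 : 0 < q := Real.sqrt_pos.mpr (by linarith)
    have hp2 : p ^ 2 = d := Real.sq_sqrt hd0.le
    have hq2 : q ^ 2 = e := Real.sq_sqrt (by linarith)
    have hsq : Real.sqrt (d * e) = p * q := Real.sqrt_mul hd0.le e
    calc Real.sqrt (d * e) * ‖∫ u in (-1:ℝ)..1, F u‖
        ≤ (p * q) * (2 * c / e * 2 + (c * (2 / p - 2) + c / d * (2 * p))) := by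
          rw [hsq]
          exact mul_le_mul_of_nonneg_left htot (by positivity)
      _ = 4 * c * p / q + 4 * c * q - 2 * c * (p * q) := by
          rw [← hp2, ← hq2]
          field_simp
          ring
      _ ≤ 8 * c := by
          have hp1 : p ≤ 1 := by nlinarith
          have hq3 : q ^ 2 ≤ 3 := by nlinarith
          have h1 : 4 * c * p / q ≤ 2 * c * (p * q) := by
            rw [div_le_iff₀ hq0]
            nlinarith [mul_nonneg (mul_nonneg hc hp0.le) (by nlinarith : (0:ℝ) ≤ q^2 - 2)]
          have h2 : 4 * c * q ≤ 8 * c := by nlinarith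
          linarith
  · -- case 1 < d
    have hp_bound : ‖∫ u in (0:ℝ)..1, F u‖ ≤ c / d * 2 := by
      apply piece_bound (by norm_num : (0:ℝ) ≤ 1)
        (g := fun u => c / d * (1 - u) ^ (-(1:ℝ)/2))
      · intro u hu
        rcases eq_or_lt_of_le hu.2 with h | h
        · rw [h, hF1]
          rw [show (1:ℝ) - 1 = 0 by norm_num, Real.zero_rpow (by norm_num)]
          simp
        · have h1 : 0 < 1 - u := by linarith
          have hb := hFb u ⟨by linarith [hu.1], hu.2⟩ (Real.sqrt (1 - u)) d
            (Real.sqrt_pos.mpr h1) hd0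
            (Real.sqrt_le_sqrt (by nlinarith [hu.1]))
            (hker_d u hu.2)
          have heq : c / (Real.sqrt (1 - u) * d) = c / d * (1 - u) ^ (-(1:ℝ)/2) := by
            rw [hrw_sqrt h1]
            have hs : Real.sqrt (1 - u) ≠ 0 := ne_of_gt (Real.sqrt_pos.mpr h1)
            have hdne : d ≠ 0 := ne_of_gt hd0
            field_simp
          linarith [hb, heq.le]
      · exact IntervalIntegrable.const_mul (by
          have h := (intervalIntegrable_rpow' (a := 0) (b := 1)
            (by norm_num : (-1:ℝ) < -(1:ℝ)/2)).comp_sub_left 1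
          rw [show (1:ℝ) - 0 = 1 by norm_num, show (1:ℝ) - 1 = 0 by norm_num] at h
          exact h.symm) _
      · rw [intervalIntegral.integral_const_mul, int_p4]
      · positivity
    have htot : ‖∫ u in (-1:ℝ)..1, F u‖ ≤ 2 * c / e * 2 + c / d * 2 := by
      rw [hsplit]
      calc ‖(∫ u in (-1:ℝ)..0, F u) + ∫ u in (0:ℝ)..1, F u‖
          ≤ ‖∫ u in (-1:ℝ)..0, F u‖ + ‖∫ u in (0:ℝ)..1, F u‖ :=
            norm_add_le _ _
        _ ≤ _ := by gcongr
    set p := Real.sqrt d with hp_def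
    set q := Real.sqrt e with hq_def
    have hp0 : 0 < p := Real.sqrt_pos.mpr hd0
    have hq0 : 0 < q := Real.sqrt_pos.mpr (by linarith)
    have hp2 : p ^ 2 = d := Real.sq_sqrt hd0.le
    have hq2 : q ^ 2 = e := Real.sq_sqrt (by linarith)
    have hsq : Real.sqrt (d * e) = p * q := Real.sqrt_mul hd0.le e
    calc Real.sqrt (d * e) * ‖∫ u in (-1:ℝ)..1, F u‖
        ≤ (p * q) * (2 * c / e * 2 + c / d * 2) := by
          rw [hsq]
          exact mul_le_mul_of_nonneg_left htot (by positivity)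
      _ = 4 * c * p / q + 2 * c * q / p := by
          rw [← hp2, ← hq2]
          field_simp
          ring
      _ ≤ 8 * c := by
          have hpq : p ≤ q := by nlinarith
          have h1 : 4 * c * p / q ≤ 4 * c := by
            rw [div_le_iff₀ hq0]
            nlinarith
          have h2 : 2 * c * q / p ≤ 4 * c := by
            rw [div_le_iff₀ hp0]
            nlinarith [hq2, hp2, hed, (by nlinarith : q ≤ 2 * p)]
          linarith

lemma spline_sup_bound
    (N : ℕ) (hN : 1 ≤ N)
    (t : ℕ → ℝ) (ht0 : t 0 = -1) (htN : t N = 1)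
    (hmono : ∀ k, k < N → t k < t (k + 1))
    (γ : ℝ)
    (hstep : ∀ k, k < N → t (k + 1) - t k ≤ γ / N)
    (f S : ℝ → ℝ) (M₁ : ℝ) (hM : 0 ≤ M₁)
    (hf : ∀ u ∈ Set.Icc (-1 : ℝ) 1, ∀ v ∈ Set.Icc (-1 : ℝ) 1, |f u - f v| ≤ M₁ * |u - v|)
    (hS : ∀ k, k < N → ∀ u ∈ Set.Icc (t k) (t (k + 1)),
      S u = ((t (k + 1) - u) * f (t k) + (u - t k) * f (t (k + 1))) / (t (k + 1) - t k))
    (u : ℝ) (hu : u ∈ Set.Icc (-1:ℝ) 1) :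
    |f u - S u| ≤ M₁ * γ / (2 * N) := by
  classical
  have hN0 : (0:ℝ) < N := by
    have : 0 < N := by omega
    exact_mod_cast this
  have tmono : ∀ j, j ≤ N → ∀ i, i ≤ j → t i ≤ t j := by
    intro j
    induction j with
    | zero =>
      intro _ i hi
      interval_cases i
      exact le_rfl
    | succ n ih =>
      intro hn i hi
      rcases Nat.eq_or_lt_of_le hi with rfl | hlt
      · exact le_rfl
      · exact le_trans (ih (by omega) i (by omega)) (le_of_lt (hmono n (by omega)))
  obtain ⟨k, hkN, hku, huk⟩ : ∃ k, k < N ∧ t k ≤ u ∧ u ≤ t (k+1) := by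
    by_cases hEnd : t N ≤ u
    · have hEq : u = t N := le_antisymm (htN ▸ hu.2) hEnd
      refine ⟨N - 1, by omega, ?_, ?_⟩
      · rw [hEq]
        exact tmono N le_rfl (N-1) (by omega)
      · rw [show N - 1 + 1 = N from by omega, hEq]
    · push_neg at hEnd
      set k := Nat.findGreatest (fun j => t j ≤ u) N with hk
      have hPk : t k ≤ u :=
        Nat.findGreatest_spec (P := fun j => t j ≤ u) (Nat.zero_le N)
          (by show t 0 ≤ u; rw [ht0]; exact hu.1)
      have hkN' : k < N := by
        rcases Nat.lt_or_ge k N with h | h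
        · exact h
        · exfalso
          have hle : k ≤ N := Nat.findGreatest_le N
          have : k = N := le_antisymm hle h
          rw [this] at hPk
          linarith
      have hng : ¬ (t (k+1) ≤ u) :=
        Nat.findGreatest_is_greatest (Nat.lt_succ_self k) (by omega)
      exact ⟨k, hkN', hPk, (not_le.mp hng).le⟩
  have htk_lb : -1 ≤ t k := by
    have := tmono k (by omega) 0 (by omega)
    rwa [ht0] at this
  have htk1_ub : t (k+1) ≤ 1 := by
    have := tmono N le_rfl (k+1) hkN
    rwa [htN] at this
  have hh : 0 < t (k+1) - t k := sub_pos.mpr (hmono k hkN)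
  have hfu1 : |f u - f (t k)| ≤ M₁ * (u - t k) := by
    have h := hf u hu (t k) ⟨htk_lb, by linarith [hu.2]⟩
    rwa [abs_of_nonneg (by linarith : (0:ℝ) ≤ u - t k)] at h
  have hfu2 : |f u - f (t (k+1))| ≤ M₁ * (t (k+1) - u) := by
    have h := hf u hu (t (k+1)) ⟨by linarith [hu.1], htk1_ub⟩
    rwa [abs_of_nonpos (by linarith : u - t (k+1) ≤ 0), neg_sub] at h
  have hSu := hS k hkN u ⟨hku, huk⟩
  have hdecomp : f u - S u =
      ((t (k+1) - u) * (f u - f (t k)) + (u - t k) * (f u - f (t (k+1)))) / (t (k+1) - t k) := by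
    rw [hSu]
    field_simp
    ring
  rw [hdecomp, abs_div, abs_of_pos hh, div_le_iff₀ hh]
  have habs : |(t (k+1) - u) * (f u - f (t k)) + (u - t k) * (f u - f (t (k+1)))| ≤
      (t (k+1) - u) * (M₁ * (u - t k)) + (u - t k) * (M₁ * (t (k+1) - u)) := by
    calc |(t (k+1) - u) * (f u - f (t k)) + (u - t k) * (f u - f (t (k+1)))|
        ≤ |(t (k+1) - u) * (f u - f (t k))| + |(u - t k) * (f u - f (t (k+1)))| := abs_add_le _ _
      _ = (t (k+1) - u) * |f u - f (t k)| + (u - t k) * |f u - f (t (k+1))| := by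
          rw [abs_mul, abs_mul, abs_of_nonneg (by linarith : (0:ℝ) ≤ t (k+1) - u),
            abs_of_nonneg (by linarith : (0:ℝ) ≤ u - t k)]
      _ ≤ _ := by
          gcongr <;> linarith
  have h4ab : 4 * ((u - t k) * (t (k+1) - u)) ≤ (t (k+1) - t k)^2 := by
    nlinarith [sq_nonneg ((u - t k) - (t (k+1) - u))]
  have key : (t (k+1) - u) * (M₁ * (u - t k)) + (u - t k) * (M₁ * (t (k+1) - u)) ≤
      M₁ * γ / (2 * N) * (t (k+1) - t k) := by
    have e2 : (t (k+1) - u) * (M₁ * (u - t k)) + (u - t k) * (M₁ * (t (k+1) - u)) ≤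
        M₁ * (t (k+1) - t k)^2 / 2 := by
      nlinarith [mul_le_mul_of_nonneg_left h4ab hM]
    have h2 := mul_le_mul_of_nonneg_left (hstep k hkN) (mul_nonneg hM hh.le)
    have e3 : M₁ * (t (k+1) - t k)^2 / 2 ≤ M₁ * γ / (2 * N) * (t (k+1) - t k) := by
      have expand : M₁ * (t (k+1) - t k) * (γ / ↑N) / 2 = M₁ * γ / (2 * N) * (t (k+1) - t k) := by
        field_simp
      nlinarith [h2]
    linarith
  exact le_trans habs key

lemma prefactor_abs (z : ℂ) (hz : 1 < |z.re|) :
    ‖z * (1 - 1/z^2) ^ ((1:ℂ)/2)‖ =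
      Real.sqrt (‖z - 1‖ * ‖z + 1‖) := by
  have hz0 : z ≠ 0 := by
    intro h
    rw [h] at hz
    norm_num at hz
  have h1 : ‖z * (1 - 1/z^2) ^ ((1:ℂ)/2)‖ =
      ‖z‖ * ‖1 - 1/z^2‖ ^ ((1:ℝ)/2) := by
    rw [norm_mul]
    congr 1
    rw [show ((1:ℂ)/2) = (((1:ℝ)/2 : ℝ) : ℂ) by norm_num]
    exact Complex.norm_cpow_real _ _
  rw [h1, ← Real.sqrt_eq_rpow, ← Real.sqrt_sq (norm_nonneg z),
    ← Real.sqrt_mul (sq_nonneg _)]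
  congr 1
  rw [← norm_pow, ← norm_mul, ← norm_mul]
  congr 1
  field_simp
  ring

theorem quadrature_error_complex_W1_table2
    (N : ℕ) (hN : 3 ≤ N)
    (t : ℕ → ℝ) (ht0 : t 0 = -1) (htN : t N = 1)
    (hmono : ∀ k, k < N → t k < t (k + 1))
    (γ : ℝ) (hγ : 0 < γ)
    (hstep : ∀ k, k < N → t (k + 1) - t k ≤ γ / N)
    (f S : ℝ → ℝ) (M₁ : ℝ)
    (hf : ∀ u ∈ Set.Icc (-1 : ℝ) 1, ∀ v ∈ Set.Icc (-1 : ℝ) 1,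
      |f u - f v| ≤ M₁ * |u - v|)
    (hS : ∀ k, k < N → ∀ u ∈ Set.Icc (t k) (t (k + 1)),
      S u = ((t (k + 1) - u) * f (t k) + (u - t k) * f (t (k + 1))) / (t (k + 1) - t k))
    (z : ℂ) (hz : 1 < |z.re|) :
    ‖(-((z * (1 - 1 / z ^ 2) ^ ((1 : ℂ) / 2)) / (π : ℂ)) *
        ∫ u in (-1 : ℝ)..1,
          ((f u - S u : ℝ) : ℂ) / ((Real.sqrt (1 - u ^ 2) : ℂ) * ((u : ℂ) - z)))‖ ≤
      Real.sqrt (((4 * γ * M₁ / π) * (1 + π * Real.sqrt 2 / (2 * γ * Real.log N)) * Real.log N) ^ 2 + (M₁ * γ / (2 * π)) ^ 2) / (N : ℝ) := by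
  have hπ : (0:ℝ) < π := Real.pi_pos
  have hN0 : (0:ℝ) < N := by
    have : 0 < N := by omega
    exact_mod_cast this
  have hM : 0 ≤ M₁ := by
    have h := hf 1 ⟨by norm_num, le_refl 1⟩ 0 ⟨by norm_num, by norm_num⟩
    norm_num at h
    linarith [abs_nonneg (f 1 - f 0)]
  set c := M₁ * γ / (2 * N) with hc_def
  have hsup : ∀ u ∈ Set.Icc (-1:ℝ) 1, |f u - S u| ≤ c :=
    spline_sup_bound N (by omega) t ht0 htN hmono γ hstep f S M₁ hM hf hS
  set G : ℝ → ℂ := fun u => ((f u - S u : ℝ) : ℂ) with hG_def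
  have hGbound : ∀ u ∈ Set.Icc (-1:ℝ) 1, ‖G u‖ ≤ c := by
    intro u hu
    rw [hG_def]
    simp only [Complex.norm_real, Real.norm_eq_abs]
    exact hsup u hu
  have hlog : 1 ≤ Real.log N := by
    have h3 : (3:ℝ) ≤ N := by exact_mod_cast hN
    have hl3 : (1:ℝ) ≤ Real.log 3 := by
      rw [Real.le_log_iff_exp_le (by norm_num : (0:ℝ) < 3)]
      linarith [Real.exp_one_lt_d9]
    have hmono' : Real.log 3 ≤ Real.log N :=
      (Real.log_le_log_iff (by norm_num) (by linarith)).mpr h3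
    linarith
  have hcore : Real.sqrt (‖z - 1‖ * ‖z + 1‖) *
      ‖∫ u in (-1:ℝ)..1,
        G u / ((Real.sqrt (1 - u ^ 2) : ℂ) * ((u : ℂ) - z))‖ ≤ 8 * c := by
    rcases lt_abs.mp hz with h | h
    · exact core_bound c G hGbound z h
    · have hcore' := core_bound c (fun u => -G (-u)) (by
        intro u hu
        simp only [norm_neg]
        exact hGbound (-u) ⟨by linarith [hu.2], by linarith [hu.1]⟩) (-z)
        (by simpa using h)
      have hinteq : (∫ u in (-1:ℝ)..1, G u / ((Real.sqrt (1 - u ^ 2) : ℂ) * ((u : ℂ) - z)))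
          = ∫ u in (-1:ℝ)..1,
              (-G (-u)) / ((Real.sqrt (1 - u ^ 2) : ℂ) * ((u : ℂ) - (-z))) := by
        have hcn := intervalIntegral.integral_comp_neg (a := (-1:ℝ)) (b := 1)
          (fun u => G u / ((Real.sqrt (1 - u ^ 2) : ℂ) * ((u : ℂ) - z)))
        rw [show -(1:ℝ) = -1 by norm_num, show -(-1:ℝ) = 1 by norm_num] at hcn
        rw [← hcn]
        apply intervalIntegral.integral_congr
        intro x hx
        simp only
        rw [show (1 - (-x)^2 : ℝ) = 1 - x^2 by ring]
        rw [show ((-x:ℝ):ℂ) = -(x:ℂ) by push_cast; ring]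
        rw [show (-(x:ℂ) - z) = -((x:ℂ) - (-z)) by ring, mul_neg, div_neg, neg_div]
      rw [hinteq]
      have habs1 : ‖-z - 1‖ = ‖z + 1‖ := by
        rw [show -z - 1 = -(z+1) by ring, norm_neg]
      have habs2 : ‖-z + 1‖ = ‖z - 1‖ := by
        rw [show -z + 1 = -(z-1) by ring, norm_neg]
      rw [habs1, habs2, mul_comm (‖z+1‖) (‖z-1‖)] at hcore'
      exact hcore'
  -- reduce LHS
  rw [norm_mul, norm_neg, norm_div, Complex.norm_real, Real.norm_eq_abs, abs_of_pos hπ,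
    prefactor_abs z hz]
  set D := Real.sqrt (‖z - 1‖ * ‖z + 1‖) with hD_def
  set I := ‖∫ u in (-1:ℝ)..1,
    G u / ((Real.sqrt (1 - u ^ 2) : ℂ) * ((u : ℂ) - z))‖ with hI_def
  set X := (4 * γ * M₁ / π) * (1 + π * Real.sqrt 2 / (2 * γ * Real.log N)) * Real.log N
    with hX_def
  have hbase : 0 ≤ 4 * γ * M₁ / π := by positivity
  have hfac : (1:ℝ) ≤ 1 + π * Real.sqrt 2 / (2 * γ * Real.log N) := by
    have h0 : (0:ℝ) ≤ π * Real.sqrt 2 / (2 * γ * Real.log N) := by positivity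
    linarith
  have hX : 4 * M₁ * γ / π ≤ X := by
    rw [hX_def]
    calc 4 * M₁ * γ / π = (4 * γ * M₁ / π) * 1 * 1 := by ring
      _ ≤ (4 * γ * M₁ / π) * (1 + π * Real.sqrt 2 / (2 * γ * Real.log N)) * Real.log N := by
          gcongr
  have hX0 : 0 ≤ X := le_trans (by positivity) hX
  calc D / π * I = (D * I) / π := by ring
    _ ≤ (8 * c) / π := by gcongr
    _ = (4 * M₁ * γ / π) / N := by
        rw [hc_def]
        field_simp
        ring
    _ ≤ X / N := by gcongr
    _ ≤ Real.sqrt (X^2 + (M₁ * γ / (2 * π))^2) / N := by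
        gcongr
        exact (Real.le_sqrt hX0 (by positivity)).mpr (by nlinarith [sq_nonneg (M₁ * γ / (2 * π))])
end

section
/- Let f belong to CC^{1,α}_Δ[−1,1] with constants K₁ and 0 < α ≤ 1, and set L = (2γ^{1+α}K₁/π)·(1 + π√2/(2γ·ln N)) and L₁ = K₁γ^{1+α}/(4π). Then for every z ∈ ℂ with |Re z| > 1, the remainder R*_N(f,z) = Φ(f − S_N, z) satisfies |R*_N(f,z)| ≤ √((L·ln N)² + L₁²)/N^{1+α}. -/
open Real MeasureTheory Filter Topology Set intervalIntegral

lemma aux_majorant_int :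
    IntervalIntegrable (fun u : ℝ => (1 - u) ^ (-(1:ℝ)/2) + (1 + u) ^ (-(1:ℝ)/2))
      volume (-1) 1 := by
  have h : (-1:ℝ) < -(1:ℝ)/2 := by norm_num
  have h1 : IntervalIntegrable (fun u : ℝ => (1 - u) ^ (-(1:ℝ)/2)) volume (-1) 1 := by
    have := ((intervalIntegrable_rpow' (a := 0) (b := 2) h).comp_sub_left 1).symm
    norm_num at this ⊢
    exact this
  have h2 : IntervalIntegrable (fun u : ℝ => (1 + u) ^ (-(1:ℝ)/2)) volume (-1) 1 := by
    have := (intervalIntegrable_rpow' (a := 0) (b := 2) h).comp_sub_right (-1)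
    norm_num [sub_neg_eq_add] at this ⊢
    simpa [add_comm] using this
  exact h1.add h2

lemma aux_one_div_sqrt_le {u : ℝ} (hu : -1 ≤ u) (hu' : u ≤ 1) :
    1 / Real.sqrt (1 - u^2) ≤ (1 - u) ^ (-(1:ℝ)/2) + (1 + u) ^ (-(1:ℝ)/2) := by
  have h1u : (0:ℝ) ≤ 1 - u := by linarith
  have h1u' : (0:ℝ) ≤ 1 + u := by linarith
  have hr1 : (1 - u) ^ (-(1:ℝ)/2) = 1 / Real.sqrt (1 - u) := by
    rw [show (-(1:ℝ)/2) = -(1/2:ℝ) by norm_num, Real.rpow_neg h1u, Real.sqrt_eq_rpow]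
    norm_num
  have hr2 : (1 + u) ^ (-(1:ℝ)/2) = 1 / Real.sqrt (1 + u) := by
    rw [show (-(1:ℝ)/2) = -(1/2:ℝ) by norm_num, Real.rpow_neg h1u', Real.sqrt_eq_rpow]
    norm_num
  have hsq : Real.sqrt (1 - u^2) = Real.sqrt (1 - u) * Real.sqrt (1 + u) := by
    rw [← Real.sqrt_mul h1u]; ring_nf
  rw [hr1, hr2, hsq]
  rcases le_total 0 u with hu0 | hu0
  · have : (1:ℝ) ≤ Real.sqrt (1 + u) := by
      nlinarith [Real.sq_sqrt h1u', Real.sqrt_nonneg (1 + u)]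
    have hpos : 0 < Real.sqrt (1 + u) := by linarith
    have h2 : 1 / (Real.sqrt (1 - u) * Real.sqrt (1 + u)) ≤ 1 / Real.sqrt (1 - u) := by
      rcases eq_or_lt_of_le (Real.sqrt_nonneg (1 - u)) with h | h
      · rw [← h]; simp
      · rw [div_le_div_iff₀ (by positivity) h]
        nlinarith
    have h3 : 0 ≤ 1 / Real.sqrt (1 + u) := by positivity
    linarith
  · have : (1:ℝ) ≤ Real.sqrt (1 - u) := by
      nlinarith [Real.sq_sqrt h1u, Real.sqrt_nonneg (1 - u)]
    have hpos : 0 < Real.sqrt (1 - u) := by linarith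
    have h2 : 1 / (Real.sqrt (1 - u) * Real.sqrt (1 + u)) ≤ 1 / Real.sqrt (1 + u) := by
      rcases eq_or_lt_of_le (Real.sqrt_nonneg (1 + u)) with h | h
      · rw [← h]; simp
      · rw [div_le_div_iff₀ (by positivity) h]
        nlinarith
    have h3 : 0 ≤ 1 / Real.sqrt (1 - u) := by positivity
    linarith

lemma aux_integrable {X : ℝ} (hX : 1 < X) :
    IntervalIntegrable (fun u : ℝ => 1 / (Real.sqrt (1 - u^2) * (X - u))) volume (-1) 1 := by
  apply (aux_majorant_int.const_mul (1/(X-1))).mono_fun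
  · apply Measurable.aestronglyMeasurable
    apply Measurable.div measurable_const
    exact (Real.continuous_sqrt.measurable.comp
      (measurable_const.sub (measurable_id.pow_const 2))).mul
      (measurable_const.sub measurable_id)
  · filter_upwards [ae_restrict_mem measurableSet_uIoc] with u hu
    rw [Set.uIoc_of_le (by norm_num : (-1:ℝ) ≤ 1)] at hu
    obtain ⟨hu1, hu2⟩ := hu
    have hXu : 0 < X - u := by linarith
    have hX1 : (0:ℝ) < X - 1 := by linarith
    have hmaj0 : (0:ℝ) ≤ (1 - u) ^ (-(1:ℝ)/2) + (1 + u) ^ (-(1:ℝ)/2) :=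
      add_nonneg (Real.rpow_nonneg (by linarith) _) (Real.rpow_nonneg (by linarith) _)
    have key : 1 / (Real.sqrt (1 - u^2) * (X - u)) ≤
        1/(X-1) * ((1 - u) ^ (-(1:ℝ)/2) + (1 + u) ^ (-(1:ℝ)/2)) := by
      rcases eq_or_lt_of_le hu2 with h | h
      · have : (1:ℝ) - u^2 = 0 := by rw [h]; norm_num
        rw [this]
        simp only [Real.sqrt_zero, zero_mul, div_zero]
        exact mul_nonneg (by positivity) hmaj0
      · have hs : 0 < Real.sqrt (1 - u^2) := Real.sqrt_pos.2 (by nlinarith)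
        have step1 : 1 / (Real.sqrt (1 - u^2) * (X - u)) ≤
            1/(X-1) * (1 / Real.sqrt (1 - u^2)) := by
          rw [div_mul_div_comm, one_mul, div_le_div_iff₀ (mul_pos hs hXu) (mul_pos hX1 hs)]
          nlinarith [hs.le]
        have step2 := aux_one_div_sqrt_le hu1.le hu2
        calc 1 / (Real.sqrt (1 - u^2) * (X - u)) ≤ 1/(X-1) * (1 / Real.sqrt (1 - u^2)) := step1
          _ ≤ 1/(X-1) * ((1 - u) ^ (-(1:ℝ)/2) + (1 + u) ^ (-(1:ℝ)/2)) :=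
              mul_le_mul_of_nonneg_left step2 (by positivity)
    have hr0 : 0 ≤ 1 / (Real.sqrt (1 - u^2) * (X - u)) :=
      div_nonneg zero_le_one (mul_nonneg (Real.sqrt_nonneg _) hXu.le)
    calc ‖1 / (Real.sqrt (1 - u^2) * (X - u))‖ = 1 / (Real.sqrt (1 - u^2) * (X - u)) := by
          rw [Real.norm_eq_abs, abs_of_nonneg hr0]
      _ ≤ 1/(X-1) * ((1 - u) ^ (-(1:ℝ)/2) + (1 + u) ^ (-(1:ℝ)/2)) := key
      _ ≤ ‖1/(X-1) * ((1 - u) ^ (-(1:ℝ)/2) + (1 + u) ^ (-(1:ℝ)/2))‖ :=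
          (le_abs_self _).trans_eq (Real.norm_eq_abs _).symm

lemma aux_integral {X : ℝ} (hX : 1 < X) :
    ∫ u in (-1:ℝ)..1, 1 / (Real.sqrt (1 - u^2) * (X - u)) = π / Real.sqrt (X^2 - 1) := by
  have hA : (0:ℝ) < X^2 - 1 := by nlinarith
  set sA := Real.sqrt (X^2 - 1) with hsA
  have hsA0 : 0 < sA := Real.sqrt_pos.2 hA
  have hsq : sA^2 = X^2 - 1 := Real.sq_sqrt hA.le
  set F : ℝ → ℝ := fun u => -(sA)⁻¹ * Real.arcsin ((1 - X*u)/(X - u)) with hF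
  have hden : ∀ u : ℝ, u ∈ Set.Icc (-1:ℝ) 1 → X - u ≠ 0 := by
    intro u hu; have := hu.2; intro h; linarith [(sub_eq_zero.mp h)]
  have hcont : ContinuousOn F (Set.Icc (-1:ℝ) 1) := by
    apply ContinuousOn.mul continuousOn_const
    apply Real.continuous_arcsin.comp_continuousOn
    exact (continuousOn_const.sub (continuousOn_const.mul continuousOn_id)).div
      (continuousOn_const.sub continuousOn_id) hden
  have hderiv : ∀ u ∈ Set.Ioo (-1:ℝ) 1,
      HasDerivAt F (1 / (Real.sqrt (1 - u^2) * (X - u))) u := by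
    intro u hu
    obtain ⟨hu1, hu2⟩ := hu
    have hXu : 0 < X - u := by linarith
    have hu2' : (0:ℝ) < 1 - u^2 := by nlinarith
    have hkey : (X - u)^2 - (1 - X*u)^2 = (X^2 - 1)*(1 - u^2) := by ring
    have hr2 : (1 - X*u)^2 < (X - u)^2 := by nlinarith
    have habs : |(1 - X*u)/(X - u)| < 1 := by
      rw [abs_div, div_lt_one (by rwa [abs_of_pos hXu])]
      have := abs_of_pos hXu
      nlinarith [abs_nonneg (1 - X*u), sq_abs (1 - X*u), sq_abs (X - u)]
    have hne1 : (1 - X*u)/(X - u) ≠ -1 := by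
      intro h; rw [h] at habs; norm_num at habs
    have hne2 : (1 - X*u)/(X - u) ≠ 1 := by
      intro h; rw [h] at habs; norm_num at habs
    have hru : HasDerivAt (fun v : ℝ => (1 - X*v)/(X - v)) ((1 - X^2)/(X - u)^2) u := by
      have h1 : HasDerivAt (fun v : ℝ => 1 - X*v) (-X) u := by
        simpa using ((hasDerivAt_id u).const_mul X).const_sub 1
      have h2 : HasDerivAt (fun v : ℝ => X - v) (-1) u := by
        simpa using (hasDerivAt_id u).const_sub X
      have := h1.fun_div h2 (ne_of_gt hXu)
      exact this.congr_deriv (by ring)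
    have harc := (Real.hasDerivAt_arcsin hne1 hne2).comp u hru
    have hda : HasDerivAt F
        (-(sA)⁻¹ * (1 / Real.sqrt (1 - ((1 - X*u)/(X - u))^2) * ((1 - X^2)/(X - u)^2))) u :=
      harc.const_mul _
    convert hda using 1
    have h1r : 1 - ((1 - X*u)/(X - u))^2 = (X^2 - 1)*(1 - u^2)/(X - u)^2 := by
      field_simp
      ring
    have hsr : Real.sqrt (1 - ((1 - X*u)/(X - u))^2) = sA * Real.sqrt (1 - u^2) / (X - u) := by
      rw [h1r, Real.sqrt_div (by positivity) , Real.sqrt_mul hA.le, Real.sqrt_sq hXu.le]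
    rw [hsr]
    have hs2 : 0 < Real.sqrt (1 - u^2) := Real.sqrt_pos.2 hu2'
    have h1X : 1 - X^2 = -(sA^2) := by rw [hsq]; ring
    rw [h1X]
    field_simp
  have hint := aux_integrable hX
  have := intervalIntegral.integral_eq_sub_of_hasDeriv_right_of_le (by norm_num)
    hcont (fun x hx => (hderiv x hx).hasDerivWithinAt) hint
  rw [this]
  have hX1 : X - 1 ≠ 0 := by intro h; linarith [sub_eq_zero.mp h]
  have e1 : (1 - X*1)/(X - 1) = -1 := by
    rw [div_eq_iff hX1]; ring
  have e2 : (1 - X*(-1))/(X - (-1)) = 1 := by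
    rw [div_eq_iff (by intro h; linarith [sub_eq_zero.mp h] : X - (-1) ≠ 0)]; ring
  simp only [hF, e1, e2, Real.arcsin_neg_one, Real.arcsin_one]
  field_simp
  ring

lemma aux_integrable_sigma {X σ : ℝ} (hX : 1 < X) (hσ : σ = 1 ∨ σ = -1) :
    IntervalIntegrable (fun u : ℝ => 1 / (Real.sqrt (1 - u^2) * (X - σ*u))) volume (-1) 1 := by
  rcases hσ with h | h
  · subst h; simpa using aux_integrable hX
  · subst h
    have h2 := ((IntervalIntegrable.iff_comp_neg).mp (aux_integrable hX)).symm
    rw [show -(-1:ℝ) = 1 by norm_num] at h2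
    have heq : (fun x : ℝ => 1 / (Real.sqrt (1 - (-x)^2) * (X - -x))) =
        (fun u : ℝ => 1 / (Real.sqrt (1 - u^2) * (X - (-1)*u))) := by
      funext x
      rw [neg_sq]
      ring_nf
    rwa [heq] at h2

lemma aux_integral_sigma {X σ : ℝ} (hX : 1 < X) (hσ : σ = 1 ∨ σ = -1) :
    ∫ u in (-1:ℝ)..1, 1 / (Real.sqrt (1 - u^2) * (X - σ*u)) = π / Real.sqrt (X^2 - 1) := by
  rcases hσ with h | h
  · subst h; simpa using aux_integral hX
  · subst h
    have h2 := intervalIntegral.integral_comp_neg (a := (-1:ℝ)) (b := 1)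
      (fun u : ℝ => 1 / (Real.sqrt (1 - u^2) * (X - u)))
    rw [show -(-1:ℝ) = 1 by norm_num] at h2
    rw [← aux_integral hX, ← h2]
    apply intervalIntegral.integral_congr
    intro x _
    simp only [neg_sq]
    ring_nf

lemma aux_norm_int_bound (e : ℝ → ℝ) (E : ℝ) (hE : 0 ≤ E)
    (hbd : ∀ u ∈ Set.Icc (-1:ℝ) 1, |e u| ≤ E) (z : ℂ) (hz : 1 < |z.re|) :
    ‖∫ u in (-1:ℝ)..1, ((e u : ℝ) : ℂ) / ((Real.sqrt (1 - u^2) : ℂ) * ((u:ℂ) - z))‖ ≤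
      Real.sqrt 2 * E * (π / Real.sqrt ((|z.re| + |z.im|)^2 - 1)) := by
  set x := z.re with hxdef
  set y := z.im with hydef
  set X := |x| + |y| with hXdef
  have hX : 1 < X := lt_of_lt_of_le hz (by simp [hXdef, abs_nonneg])
  obtain ⟨σ, hσ, hσx⟩ : ∃ σ : ℝ, (σ = 1 ∨ σ = -1) ∧ σ * x = |x| := by
    rcases le_or_gt 0 x with h | h
    · exact ⟨1, Or.inl rfl, by rw [one_mul, abs_of_nonneg h]⟩
    · exact ⟨-1, Or.inr rfl, by rw [abs_of_neg h]; ring⟩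
  have hσabs : |σ| = 1 := by rcases hσ with h | h <;> simp [h]
  have hA : (0:ℝ) < X^2 - 1 := by nlinarith
  have key : ∀ u ∈ Set.uIoc (-1:ℝ) 1,
      ‖((e u : ℝ) : ℂ) / ((Real.sqrt (1 - u^2) : ℂ) * ((u:ℂ) - z))‖ ≤
      Real.sqrt 2 * E * (1 / (Real.sqrt (1 - u^2) * (X - σ*u))) := by
    intro u hu
    rw [Set.uIoc_of_le (by norm_num : (-1:ℝ) ≤ 1)] at hu
    obtain ⟨hu1, hu2⟩ := hu
    have hXσu : 0 < X - σ*u := by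
      have h1 : σ*u ≤ |u| := by
        calc σ*u ≤ |σ*u| := le_abs_self _
          _ = |σ| * |u| := abs_mul _ _
          _ = |u| := by rw [hσabs, one_mul]
      have h2 : |u| ≤ 1 := abs_le.2 ⟨hu1.le, hu2⟩
      have : 1 < |x| := hz
      have : (0:ℝ) ≤ |y| := abs_nonneg y
      simp only [hXdef]
      linarith
    rcases eq_or_lt_of_le hu2 with h | h
    · have hzero : (1:ℝ) - u^2 = 0 := by rw [h]; norm_num
      rw [hzero]
      simp only [Real.sqrt_zero, Complex.ofReal_zero, zero_mul, div_zero, norm_zero,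
        mul_zero, zero_mul, div_zero]
      positivity
    · have hs : 0 < Real.sqrt (1 - u^2) := Real.sqrt_pos.2 (by nlinarith)
      have habs : (X - σ*u) / Real.sqrt 2 ≤ ‖(u:ℂ) - z‖ := by
        have hre : ((u:ℂ) - z).re = u - x := by simp [hxdef]
        have him : ((u:ℂ) - z).im = -y := by simp [hydef]
        have habs2 : (‖(u:ℂ) - z‖)^2 = (u - x)^2 + y^2 := by
          rw [Complex.sq_norm, Complex.normSq_apply, hre, him]; ring
        have hXσu2 : X - σ*u ≤ |x - u| + |y| := by
          have : σ*(x - u) ≤ |x - u| := by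
            calc σ*(x-u) ≤ |σ*(x-u)| := le_abs_self _
              _ = |x - u| := by rw [abs_mul, hσabs, one_mul]
          have hexp : X - σ*u = σ*(x-u) + |y| := by
            simp only [hXdef, ← hσx]; ring
          linarith
        have hsq2 : (|x - u| + |y|)^2 ≤ 2 * ((u-x)^2 + y^2) := by
          have h1 : |x - u|^2 = (u-x)^2 := by rw [sq_abs]; ring
          have h2 : |y|^2 = y^2 := sq_abs y
          nlinarith [sq_nonneg (|x - u| - |y|)]
        have h2pos : (0:ℝ) < Real.sqrt 2 := by positivity
        rw [div_le_iff₀ h2pos]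
        have hq : ‖(u:ℂ) - z‖ * Real.sqrt 2 = Real.sqrt (2*((u-x)^2 + y^2)) := by
          rw [Real.sqrt_mul (by norm_num : (0:ℝ) ≤ 2), mul_comm]
          congr 1
          rw [← habs2, Real.sqrt_sq (norm_nonneg _)]
        rw [hq]
        calc X - σ*u ≤ |x - u| + |y| := hXσu2
          _ = Real.sqrt ((|x - u| + |y|)^2) := by
              rw [Real.sqrt_sq (by positivity)]
          _ ≤ Real.sqrt (2*((u-x)^2 + y^2)) := Real.sqrt_le_sqrt hsq2
      have habspos : 0 < ‖(u:ℂ) - z‖ :=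
        lt_of_lt_of_le (by positivity) habs
      have hnorm : ‖((e u : ℝ) : ℂ) / ((Real.sqrt (1 - u^2) : ℂ) * ((u:ℂ) - z))‖ =
          |e u| / (Real.sqrt (1 - u^2) * ‖(u:ℂ) - z‖) := by
        rw [norm_div, norm_mul, Complex.norm_real, Complex.norm_real, Real.norm_eq_abs,
          Real.norm_eq_abs, abs_of_nonneg (Real.sqrt_nonneg _)]
      rw [hnorm]
      have hden : 0 < Real.sqrt (1 - u^2) * ‖(u:ℂ) - z‖ := mul_pos hs habspos
      have h2pos : (0:ℝ) < Real.sqrt 2 := by positivity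
      calc |e u| / (Real.sqrt (1 - u^2) * ‖(u:ℂ) - z‖)
          ≤ E / (Real.sqrt (1 - u^2) * ‖(u:ℂ) - z‖) := by
            gcongr
            exact hbd u ⟨hu1.le, hu2⟩
        _ ≤ E / (Real.sqrt (1 - u^2) * ((X - σ*u)/Real.sqrt 2)) :=
            div_le_div_of_nonneg_left hE (mul_pos hs (div_pos hXσu h2pos))
              (mul_le_mul_of_nonneg_left habs hs.le)
        _ = Real.sqrt 2 * E * (1 / (Real.sqrt (1 - u^2) * (X - σ*u))) := by
            field_simp
  have hbound := (aux_integrable_sigma hX hσ).const_mul (Real.sqrt 2 * E)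
  have hle := intervalIntegral.norm_integral_le_abs_of_norm_le
    (f := fun u : ℝ => ((e u : ℝ) : ℂ) / ((Real.sqrt (1 - u^2) : ℂ) * ((u:ℂ) - z)))
    (by filter_upwards [ae_restrict_mem measurableSet_uIoc] with u hu using key u hu)
    hbound
  have hval : ∫ u in (-1:ℝ)..1, Real.sqrt 2 * E * (1 / (Real.sqrt (1 - u^2) * (X - σ*u)))
      = Real.sqrt 2 * E * (π / Real.sqrt (X^2 - 1)) := by
    rw [intervalIntegral.integral_const_mul, aux_integral_sigma hX hσ]
  rw [hval] at hle
  refine hle.trans (le_of_eq (abs_of_nonneg ?_))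
  have : (0:ℝ) ≤ π / Real.sqrt (X^2-1) := by positivity
  positivity

lemma aux_cover {N : ℕ} (hN : 0 < N) (t : ℕ → ℝ) (hmono : ∀ k, k < N → t k < t (k+1))
    {u : ℝ} (h0 : t 0 ≤ u) (hNu : u ≤ t N) :
    ∃ k, k < N ∧ u ∈ Set.Icc (t k) (t (k+1)) := by
  letI : DecidablePred (fun j : ℕ => t j ≤ u) := fun j => Real.decidableLE _ _
  by_cases hcase : t N ≤ u
  · have huN : u = t N := le_antisymm hNu hcase
    refine ⟨N-1, by omega, ?_, ?_⟩
    · have := hmono (N-1) (by omega)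
      rw [show N - 1 + 1 = N by omega] at this
      rw [huN]
      exact this.le
    · rw [show N - 1 + 1 = N by omega, huN]
  · push_neg at hcase
    have hkN : Nat.findGreatest (fun j => t j ≤ u) N ≤ N := Nat.findGreatest_le N
    have hkP : t (Nat.findGreatest (fun j => t j ≤ u) N) ≤ u :=
      Nat.findGreatest_spec (P := fun j => t j ≤ u) (Nat.zero_le N) h0
    have hkNe : Nat.findGreatest (fun j => t j ≤ u) N ≠ N := by
      intro h; rw [h] at hkP; exact absurd hkP (not_le.2 hcase)
    have hklt : Nat.findGreatest (fun j => t j ≤ u) N < N := lt_of_le_of_ne hkN hkNe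
    refine ⟨Nat.findGreatest (fun j => t j ≤ u) N, hklt, hkP, ?_⟩
    by_contra hlt
    push_neg at hlt
    have hP1 : t (Nat.findGreatest (fun j => t j ≤ u) N + 1) ≤ u := hlt.le
    exact Nat.findGreatest_is_greatest (Nat.lt_succ_self _) (Nat.succ_le_of_lt hklt) hP1

set_option maxHeartbeats 1000000 in
theorem quadrature_error_complex_CC1alpha_table2
    (N : ℕ) (hN : 3 ≤ N)
    (t : ℕ → ℝ) (ht0 : t 0 = -1) (htN : t N = 1)
    (hmono : ∀ k, k < N → t k < t (k + 1))
    (γ : ℝ) (hγ : 0 < γ)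
    (hstep : ∀ k, k < N → t (k + 1) - t k ≤ γ / N)
    (f S : ℝ → ℝ) (K₁ α : ℝ) (hα : 0 < α) (hα1 : α ≤ 1)
    (hfc : ContinuousOn f (Set.Icc (-1 : ℝ) 1))
    (hf : ∀ k, k < N → ∃ g : ℝ → ℝ,
      (∀ u ∈ Set.Icc (t k) (t (k + 1)),
        HasDerivWithinAt f (g u) (Set.Icc (t k) (t (k + 1))) u) ∧
      (∀ u ∈ Set.Icc (t k) (t (k + 1)), ∀ v ∈ Set.Icc (t k) (t (k + 1)),
        |g u - g v| ≤ K₁ * |u - v| ^ α))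
    (hS : ∀ k, k < N → ∀ u ∈ Set.Icc (t k) (t (k + 1)),
      S u = ((t (k + 1) - u) * f (t k) + (u - t k) * f (t (k + 1))) / (t (k + 1) - t k))
    (z : ℂ) (hz : 1 < |z.re|) :
    ‖(-((z * (1 - 1 / z ^ 2) ^ ((1 : ℂ) / 2)) / (π : ℂ)) *
        ∫ u in (-1 : ℝ)..1,
          ((f u - S u : ℝ) : ℂ) / ((Real.sqrt (1 - u ^ 2) : ℂ) * ((u : ℂ) - z)))‖ ≤
      Real.sqrt (((2 * γ ^ (1 + α) * K₁ / π) * (1 + π * Real.sqrt 2 / (2 * γ * Real.log N)) * Real.log N) ^ 2 + (K₁ * γ ^ (1 + α) / (4 * π)) ^ 2) / (N : ℝ) ^ (1 + α) := by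
  have hπ : (0:ℝ) < π := Real.pi_pos
  have hN3 : (3:ℝ) ≤ (N:ℝ) := by exact_mod_cast hN
  have hNpos : (0:ℝ) < (N:ℝ) := by linarith
  -- K₁ is nonnegative
  have hK₁ : 0 ≤ K₁ := by
    obtain ⟨g, _, hH⟩ := hf 0 (by omega)
    have h01 : t 0 < t 1 := hmono 0 (by omega)
    have hm0 : t 0 ∈ Set.Icc (t 0) (t (0+1)) := ⟨le_refl _, h01.le⟩
    have hm1 : t 1 ∈ Set.Icc (t 0) (t (0+1)) := ⟨h01.le, le_refl _⟩
    have := hH (t 0) hm0 (t 1) hm1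
    have hpow : 0 < |t 0 - t 1| ^ α :=
      Real.rpow_pos_of_pos (abs_pos.2 (by linarith)) α
    nlinarith [abs_nonneg (g (t 0) - g (t 1))]
  have h1α : (0:ℝ) ≤ 1 + α := by linarith
  set E := K₁ * (γ/(N:ℝ))^(1+α) / 4 with hEdef
  have hE0 : 0 ≤ E :=
    div_nonneg (mul_nonneg hK₁ (Real.rpow_nonneg (by positivity) _)) (by norm_num)
  -- spline error bound
  have hspline : ∀ u ∈ Set.Icc (-1:ℝ) 1, |f u - S u| ≤ E := by
    intro u hu
    obtain ⟨k, hk, hmem⟩ := aux_cover (by omega) t hmono (ht0 ▸ hu.1) (htN ▸ hu.2)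
    obtain ⟨g, hg, hH⟩ := hf k hk
    have hab : t k < t (k+1) := hmono k hk
    have hba : t (k+1) - t k ≠ 0 := by linarith
    have hh : t (k+1) - t k ≤ γ/(N:ℝ) := hstep k hk
    have hSu := hS k hk u hmem
    have hEb : K₁ * (t (k+1) - t k)^(1+α) / 4 ≤ E := by
      rw [hEdef]
      have : (t (k+1) - t k)^(1+α) ≤ (γ/(N:ℝ))^(1+α) :=
        Real.rpow_le_rpow (by linarith) hh h1α
      have := mul_le_mul_of_nonneg_left this hK₁
      linarith
    rcases eq_or_lt_of_le hmem.1 with h | hau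
    · have : S u = f u := by
        rw [hSu, ← h]
        field_simp
        ring
      rw [this, sub_self, abs_zero]
      exact hE0
    rcases eq_or_lt_of_le hmem.2 with h | hub
    · have : S u = f u := by
        rw [hSu, h]
        field_simp
        ring
      rw [this, sub_self, abs_zero]
      exact hE0
    have hcont : ContinuousOn f (Set.Icc (t k) (t (k+1))) :=
      fun w hw => (hg w hw).continuousWithinAt
    have hderiv_open : ∀ w ∈ Set.Ioo (t k) (t (k+1)), HasDerivAt f (g w) w := fun w hw =>
      (hg w (Set.Ioo_subset_Icc_self hw)).hasDerivAt (Icc_mem_nhds hw.1 hw.2)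
    obtain ⟨ξ, hξ, hξs⟩ := exists_hasDerivAt_eq_slope f g hau
      (hcont.mono (Set.Icc_subset_Icc le_rfl hmem.2))
      (fun w hw => hderiv_open w ⟨hw.1, lt_of_lt_of_le hw.2 hmem.2⟩)
    obtain ⟨η, hη, hηs⟩ := exists_hasDerivAt_eq_slope f g hub
      (hcont.mono (Set.Icc_subset_Icc hmem.1 le_rfl))
      (fun w hw => hderiv_open w ⟨lt_of_le_of_lt hmem.1 hw.1, hw.2⟩)
    have hua : u - t k ≠ 0 := by linarith
    have hbu : t (k+1) - u ≠ 0 := by linarith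
    have e1 : f u - f (t k) = g ξ * (u - t k) := by
      rw [hξs]; exact (div_mul_cancel₀ _ hua).symm
    have e2 : f (t (k+1)) - f u = g η * (t (k+1) - u) := by
      rw [hηs]; exact (div_mul_cancel₀ _ hbu).symm
    have hSu' : S u * (t (k+1) - t k) = (t (k+1) - u) * f (t k) + (u - t k) * f (t (k+1)) := by
      rw [hSu, div_mul_cancel₀ _ hba]
    have hfs : (f u - S u) * (t (k+1) - t k) = (u - t k) * (t (k+1) - u) * (g ξ - g η) := by
      linear_combination (t (k+1) - u) * e1 - (u - t k) * e2 - hSu'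
    have hfs2 : f u - S u = (u - t k) * (t (k+1) - u) * (g ξ - g η) / (t (k+1) - t k) := by
      rw [eq_div_iff hba]; exact hfs
    have hgd : |g ξ - g η| ≤ K₁ * (t (k+1) - t k)^α := by
      have hξm : ξ ∈ Set.Icc (t k) (t (k+1)) :=
        ⟨hξ.1.le, le_trans hξ.2.le hmem.2⟩
      have hηm : η ∈ Set.Icc (t k) (t (k+1)) :=
        ⟨le_trans hmem.1 hη.1.le, hη.2.le⟩
      have h1 := hH ξ hξm η hηm
      have h2 : |ξ - η| ≤ t (k+1) - t k := by
        rw [abs_le]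
        refine ⟨by linarith [hξm.1, hηm.2], by linarith [hξm.2, hηm.1]⟩
      have h3 : |ξ - η| ^ α ≤ (t (k+1) - t k)^α :=
        Real.rpow_le_rpow (abs_nonneg _) h2 hα.le
      calc |g ξ - g η| ≤ K₁ * |ξ - η| ^ α := h1
        _ ≤ K₁ * (t (k+1) - t k)^α := mul_le_mul_of_nonneg_left h3 hK₁
    have hprod : (u - t k) * (t (k+1) - u) ≤ (t (k+1) - t k)^2 / 4 := by
      nlinarith [sq_nonneg ((u - t k) - (t (k+1) - u))]
    calc |f u - S u| = (u - t k) * (t (k+1) - u) * |g ξ - g η| / (t (k+1) - t k) := by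
          rw [hfs2, abs_div, abs_of_pos (by linarith : (0:ℝ) < t (k+1) - t k), abs_mul,
            abs_of_nonneg (by nlinarith : (0:ℝ) ≤ (u - t k) * (t (k+1) - u))]
      _ ≤ ((t (k+1) - t k)^2/4) * (K₁ * (t (k+1) - t k)^α) / (t (k+1) - t k) := by
          have hnum : (u - t k) * (t (k+1) - u) * |g ξ - g η| ≤
              ((t (k+1) - t k)^2/4) * (K₁ * (t (k+1) - t k)^α) :=
            mul_le_mul hprod hgd (abs_nonneg _) (by positivity)
          exact (div_le_div_iff_of_pos_right (by linarith)).mpr hnum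
      _ = K₁ * (t (k+1) - t k)^(1+α) / 4 := by
          rw [Real.rpow_add (by linarith : (0:ℝ) < t (k+1) - t k), Real.rpow_one]
          field_simp
      _ ≤ E := hEb
  -- geometry of z
  set X := |z.re| + |z.im| with hXdef
  have hX1 : 1 < X := lt_of_lt_of_le hz (le_add_of_nonneg_right (abs_nonneg _))
  have hA : (0:ℝ) < X^2 - 1 := by nlinarith
  have hsA : 0 < Real.sqrt (X^2 - 1) := Real.sqrt_pos.2 hA
  have hz0 : z ≠ 0 := by
    intro h
    rw [h] at hz
    norm_num at hz
  have habsz2 : ‖z^2 - 1‖ ≤ X^2 - 1 := by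
    have hre : (z^2 - 1).re = z.re^2 - z.im^2 - 1 := by
      rw [Complex.sub_re, pow_two, Complex.mul_re, Complex.one_re]
      ring
    have him : (z^2 - 1).im = 2*(z.re*z.im) := by
      rw [Complex.sub_im, pow_two, Complex.mul_im, Complex.one_im]
      ring
    have hsq : (‖z^2-1‖)^2 = (z.re^2 - z.im^2 - 1)^2 + (2*(z.re*z.im))^2 := by
      rw [Complex.sq_norm, Complex.normSq_apply, hre, him]
      ring
    have h1 : z.re^2 = |z.re|^2 := (sq_abs _).symm
    have h2 : z.im^2 = |z.im|^2 := (sq_abs _).symm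
    have h3 : (0:ℝ) ≤ |z.re| := abs_nonneg _
    have h4 : (0:ℝ) ≤ |z.im| := abs_nonneg _
    have h5 : (z.re*z.im)^2 = (|z.re| * |z.im|)^2 := by rw [← abs_mul, sq_abs]
    have h6 : 1 ≤ |z.re| := hz.le
    have hXge : (‖z^2-1‖)^2 ≤ (X^2-1)^2 := by
      rw [hsq, hXdef]
      have h7 : (0:ℝ) ≤ |z.re| * |z.im| := mul_nonneg h3 h4
      have h8 : (0:ℝ) ≤ |z.re|^2 - 1 := by nlinarith
      nlinarith [mul_nonneg (sq_nonneg (|z.im|)) h8, mul_nonneg h7 h8,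
        mul_nonneg h7 (sq_nonneg (|z.im|))]
    nlinarith [norm_nonneg (z^2-1)]
  have hW : ‖z * (1 - 1/z^2) ^ ((1:ℂ)/2)‖ ≤ Real.sqrt (X^2 - 1) := by
    have hexp : ((1:ℂ)/2) = (((1:ℝ)/2 : ℝ) : ℂ) := by norm_num
    rw [norm_mul, hexp, Complex.norm_cpow_real]
    have hzz : z^2 * (1 - 1/z^2) = z^2 - 1 := by
      field_simp
    have hprod : ‖z‖ ^ 2 * ‖1 - 1/z^2‖ = ‖z^2 - 1‖ := by
      rw [← norm_pow, ← norm_mul, hzz]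
    have heq : ‖z‖ * ‖1 - 1/z^2‖ ^ ((1:ℝ)/2) =
        Real.sqrt (‖z^2 - 1‖) := by
      rw [← hprod, Real.sqrt_mul (sq_nonneg _), Real.sqrt_sq (norm_nonneg _),
        Real.sqrt_eq_rpow]
    rw [heq]
    exact Real.sqrt_le_sqrt habsz2
  have hIb := aux_norm_int_bound (fun u => f u - S u) E hE0 hspline z hz
  -- numeric facts
  have hs2 : Real.sqrt 2 ≤ 1.5 := by
    nlinarith [Real.sq_sqrt (by norm_num : (0:ℝ) ≤ 2), Real.sqrt_nonneg 2]
  have hs2' : (0:ℝ) ≤ Real.sqrt 2 := Real.sqrt_nonneg 2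
  have hπ' : π ≤ 3.15 := by nlinarith [Real.pi_lt_d2]
  have hlog1 : 1 ≤ Real.log N := by
    rw [Real.le_log_iff_exp_le hNpos]
    calc Real.exp 1 ≤ 2.7182818286 := Real.exp_one_lt_d9.le
      _ ≤ 3 := by norm_num
      _ ≤ (N:ℝ) := hN3
  have hG : 0 ≤ K₁ * γ^(1+α) := mul_nonneg hK₁ (Real.rpow_nonneg hγ.le _)
  set T := (2 * γ ^ (1 + α) * K₁ / π) * (1 + π * Real.sqrt 2 / (2 * γ * Real.log N)) * Real.log N with hT
  have hC : 0 ≤ 2*γ^(1+α)*K₁/π := div_nonneg (by nlinarith) hπ.le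
  have hs0 : 0 ≤ π * Real.sqrt 2 / (2 * γ * Real.log N) :=
    div_nonneg (by positivity) (by nlinarith)
  have hT2 : (2 * γ^(1+α) * K₁/π) * Real.log N ≤ T := by
    rw [hT]
    calc (2*γ^(1+α)*K₁/π)*Real.log N = (2*γ^(1+α)*K₁/π)*1*Real.log N := by ring
      _ ≤ (2*γ^(1+α)*K₁/π)*(1 + π*Real.sqrt 2/(2*γ*Real.log N))*Real.log N := by
          apply mul_le_mul_of_nonneg_right
            (mul_le_mul_of_nonneg_left (by linarith) hC) (by linarith)
  have hsp : Real.sqrt 2 * π ≤ 8 := by nlinarith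
  have hT1 : Real.sqrt 2 * K₁ * γ^(1+α)/4 ≤ (2*γ^(1+α)*K₁/π) * Real.log N := by
    have hstep1 : (2*γ^(1+α)*K₁/π) * 1 ≤ (2*γ^(1+α)*K₁/π) * Real.log N :=
      mul_le_mul_of_nonneg_left hlog1 hC
    have hstep2 : Real.sqrt 2 * K₁ * γ^(1+α)/4 ≤ (2*γ^(1+α)*K₁/π) * 1 := by
      rw [mul_one, div_le_div_iff₀ (by norm_num : (0:ℝ) < 4) hπ]
      nlinarith [mul_le_mul_of_nonneg_right hsp hG]
    linarith
  have hTfinal : Real.sqrt 2 * K₁ * γ^(1+α)/4 ≤ T := le_trans hT1 hT2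
  have hT0 : 0 ≤ T := le_trans (by positivity) hTfinal
  have hTle : T ≤ Real.sqrt (T^2 + (K₁*γ^(1+α)/(4*π))^2) := by
    calc T = Real.sqrt (T^2) := (Real.sqrt_sq hT0).symm
      _ ≤ Real.sqrt (T^2 + (K₁*γ^(1+α)/(4*π))^2) :=
          Real.sqrt_le_sqrt (by nlinarith [sq_nonneg (K₁*γ^(1+α)/(4*π))])
  have hdivpow : (γ/(N:ℝ))^(1+α) = γ^(1+α)/(N:ℝ)^(1+α) := Real.div_rpow hγ.le hNpos.le (1+α)
  have hNpow : (0:ℝ) < (N:ℝ)^(1+α) := Real.rpow_pos_of_pos hNpos _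
  calc ‖-(z * (1 - 1 / z ^ 2) ^ ((1:ℂ)/2) / (π:ℂ)) *
        ∫ u in (-1:ℝ)..1, ((f u - S u : ℝ) : ℂ) / ((Real.sqrt (1 - u ^ 2) : ℂ) * ((u:ℂ) - z))‖
      = (‖z * (1 - 1 / z ^ 2) ^ ((1:ℂ)/2)‖ / π) *
        ‖∫ u in (-1:ℝ)..1, ((f u - S u : ℝ) : ℂ) / ((Real.sqrt (1 - u ^ 2) : ℂ) * ((u:ℂ) - z))‖ := by
        rw [norm_mul, norm_neg, norm_div, Complex.norm_real,
          Real.norm_eq_abs, abs_of_pos hπ]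
    _ ≤ (Real.sqrt (X^2-1) / π) * (Real.sqrt 2 * E * (π / Real.sqrt (X^2-1))) := by
        apply mul_le_mul ((div_le_div_iff_of_pos_right hπ).mpr hW) hIb (norm_nonneg _) (by positivity)
    _ = Real.sqrt 2 * E := by
        field_simp
    _ ≤ Real.sqrt (T^2 + (K₁*γ^(1+α)/(4*π))^2) / (N:ℝ)^(1+α) := by
        have hE' : Real.sqrt 2 * E = (Real.sqrt 2 * K₁ * γ^(1+α)/4) / (N:ℝ)^(1+α) := by
          rw [hEdef, hdivpow]
          field_simp
        rw [hE']
        exact (div_le_div_iff_of_pos_right hNpow).mpr (le_trans hTfinal hTle)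
end

section
/- Let f belong to CC^{1,α}_Δ[−1,1] with constants K₁ and 0 < α ≤ 1, let h = max_{0≤k≤N−1} h_k, and let r_N = S_N − f be the spline interpolation error. Then r_N satisfies the Lipschitz condition |r_N(t) − r_N(t′)| ≤ K₁·h^α·|t − t′| for all t, t′ ∈ [−1,1]. -/
open Real MeasureTheory Filter Topology

theorem spline_remainder_lipschitz_CC1alpha
    (N : ℕ) (hN : 1 ≤ N)
    (t : ℕ → ℝ) (ht0 : t 0 = -1) (htN : t N = 1)
    (hmono : ∀ k, k < N → t k < t (k + 1))
    (f S : ℝ → ℝ) (K₁ α : ℝ) (hα : 0 < α) (hα1 : α ≤ 1)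
    (hfc : ContinuousOn f (Set.Icc (-1 : ℝ) 1))
    (hf : ∀ k, k < N → ∃ g : ℝ → ℝ,
      (∀ u ∈ Set.Icc (t k) (t (k + 1)),
        HasDerivWithinAt f (g u) (Set.Icc (t k) (t (k + 1))) u) ∧
      (∀ u ∈ Set.Icc (t k) (t (k + 1)), ∀ v ∈ Set.Icc (t k) (t (k + 1)),
        |g u - g v| ≤ K₁ * |u - v| ^ α))
    (hS : ∀ k, k < N → ∀ u ∈ Set.Icc (t k) (t (k + 1)),
      S u = ((t (k + 1) - u) * f (t k) + (u - t k) * f (t (k + 1))) / (t (k + 1) - t k))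
    (h : ℝ)
    (hmax : h = (Finset.range N).sup' (Finset.nonempty_range_iff.mpr (by omega))
      (fun k => t (k + 1) - t k))
    (u : ℝ) (hu : u ∈ Set.Icc (-1 : ℝ) 1) (v : ℝ) (hv : v ∈ Set.Icc (-1 : ℝ) 1) :
    |(S u - f u) - (S v - f v)| ≤ K₁ * h ^ α * |u - v| := by
  -- basic facts
  have h01 : t 0 < t 1 := hmono 0 (by omega)
  have hhk : ∀ k, k < N → t (k + 1) - t k ≤ h := by
    intro k hk
    rw [hmax]
    exact Finset.le_sup' (fun k => t (k + 1) - t k) (Finset.mem_range.mpr hk)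
  have hhpos : 0 < h := lt_of_lt_of_le (by linarith) (hhk 0 (by omega))
  have hK : 0 ≤ K₁ := by
    obtain ⟨g, hg, hgl⟩ := hf 0 (by omega)
    have h1 := hgl (t 0) ⟨le_refl _, h01.le⟩ (t 1) ⟨h01.le, le_refl _⟩
    have hpos : (0:ℝ) < |t 0 - t 1| ^ α :=
      Real.rpow_pos_of_pos (abs_pos.mpr (by linarith)) α
    nlinarith [abs_nonneg (g (t 0) - g (t 1))]
  set C : ℝ := K₁ * h ^ α with hC
  have hC0 : 0 ≤ C := mul_nonneg hK (Real.rpow_nonneg hhpos.le α)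
  set r : ℝ → ℝ := fun x => S x - f x with hr
  -- the key per-interval estimate
  have key : ∀ k, k < N → ∀ x ∈ Set.Icc (t k) (t (k + 1)),
      ∀ y ∈ Set.Icc (t k) (t (k + 1)), |r x - r y| ≤ C * |x - y| := by
    intro k hk
    obtain ⟨g, hg, hgl⟩ := hf k hk
    set a := t k with ha
    set b := t (k + 1) with hb
    have hab : a < b := hmono k hk
    have hcont : ContinuousOn f (Set.Icc a b) := fun x hx =>
      (hg x hx).continuousWithinAt
    have hderiv : ∀ x ∈ Set.Ioo a b, HasDerivAt f (g x) x := by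
      intro x hx
      exact (hg x (Set.Ioo_subset_Icc_self hx)).hasDerivAt (Icc_mem_nhds hx.1 hx.2)
    obtain ⟨ξ, hξ, hξeq⟩ := exists_hasDerivAt_eq_slope f g hab hcont hderiv
    -- r has derivative g ξ - g x within Icc a b
    have hrder : ∀ x ∈ Set.Icc a b, HasDerivWithinAt r (g ξ - g x) (Set.Icc a b) x := by
      intro x hx
      have hSder : HasDerivWithinAt S (g ξ) (Set.Icc a b) x := by
        have haff : HasDerivAt (fun y : ℝ => ((b - y) * f a + (y - a) * f b) / (b - a))
            ((-f a + f b) / (b - a)) x := by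
          have : HasDerivAt (fun y : ℝ => (b - y) * f a + (y - a) * f b)
              (-f a + f b) x := by
            have h1 := (((hasDerivAt_id x).const_sub b).mul_const (f a)).add
              (((hasDerivAt_id x).sub_const a).mul_const (f b))
            convert h1 using 1 <;> first | rfl | ring
          exact this.div_const (b - a)
        have heq : (-f a + f b) / (b - a) = g ξ := by
          rw [hξeq]; ring
        rw [← heq]
        refine haff.hasDerivWithinAt.congr ?_ ?_
        · intro y hy; rw [ha, hb]; exact hS k hk y hy
        · rw [ha, hb]; exact hS k hk x hx
      exact hSder.sub (hg x hx)
    -- bound on the derivative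
    have hbound : ∀ x ∈ Set.Icc a b, ‖g ξ - g x‖ ≤ C := by
      intro x hx
      have h1 : |g ξ - g x| ≤ K₁ * |ξ - x| ^ α :=
        hgl ξ (Set.Ioo_subset_Icc_self hξ) x hx
      have h2 : |ξ - x| ≤ h := by
        have : |ξ - x| ≤ b - a := by
          rw [abs_sub_le_iff]
          constructor <;> [skip; skip] <;>
            · have := hξ.1; have := hξ.2; have := hx.1; have := hx.2; linarith
        linarith [hhk k hk]
      have h3 : |ξ - x| ^ α ≤ h ^ α :=
        Real.rpow_le_rpow (abs_nonneg _) h2 hα.le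
      calc ‖g ξ - g x‖ = |g ξ - g x| := rfl
        _ ≤ K₁ * |ξ - x| ^ α := h1
        _ ≤ K₁ * h ^ α := by nlinarith
    intro x hx y hy
    have := (convex_Icc a b).norm_image_sub_le_of_norm_hasDerivWithin_le
      hrder hbound hy hx
    simpa [Real.norm_eq_abs] using this
  -- monotonicity of the grid
  have htmono : ∀ j k : ℕ, j ≤ k → k ≤ N → t j ≤ t k := by
    intro j k hjk hkN
    induction k with
    | zero => simp_all
    | succ n ih =>
      rcases Nat.eq_or_lt_of_le hjk with h1 | h1
      · rw [h1]
      · exact le_trans (ih (by omega) (by omega)) (hmono n (by omega)).le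
  -- ordered gluing by induction
  have main : ∀ k, k ≤ N → ∀ x y, x ∈ Set.Icc (t 0) (t k) → y ∈ Set.Icc (t 0) (t k) →
      x ≤ y → |r x - r y| ≤ C * |x - y| := by
    intro k
    induction k with
    | zero =>
      intro _ x y hx hy _
      have hx' : x = t 0 := le_antisymm hx.2 hx.1
      have hy' : y = t 0 := le_antisymm hy.2 hy.1
      subst hx'; rw [hy']
      simp
    | succ n ih =>
      intro hn1 x y hx hy hxy
      have hn : n < N := by omega
      rcases le_total y (t n) with h1 | h1
      · exact ih (by omega) x y ⟨hx.1, le_trans hxy h1⟩ ⟨hy.1, h1⟩ hxy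
      · rcases le_total (t n) x with h2 | h2
        · exact key n hn x ⟨h2, hx.2⟩ y ⟨le_trans h2 hxy, hy.2⟩
        · -- x ≤ t n ≤ y
          have e1 : |r x - r (t n)| ≤ C * |x - t n| :=
            ih (by omega) x (t n) ⟨hx.1, h2⟩ ⟨htmono 0 n (by omega) (by omega), le_refl _⟩ h2
          have e2 : |r (t n) - r y| ≤ C * |t n - y| :=
            key n hn (t n) ⟨le_refl _, (hmono n hn).le⟩ y ⟨h1, hy.2⟩
          have e3 : |r x - r y| ≤ |r x - r (t n)| + |r (t n) - r y| := abs_sub_le _ _ _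
          have a1 : |x - t n| = t n - x := by rw [abs_sub_comm, abs_of_nonneg]; linarith
          have a2 : |t n - y| = y - t n := by rw [abs_sub_comm, abs_of_nonneg]; linarith
          have a3 : |x - y| = y - x := by rw [abs_sub_comm, abs_of_nonneg]; linarith
          rw [a1] at e1; rw [a2] at e2; rw [a3]
          nlinarith
  have hu' : u ∈ Set.Icc (t 0) (t N) := by rw [ht0, htN]; exact hu
  have hv' : v ∈ Set.Icc (t 0) (t N) := by rw [ht0, htN]; exact hv
  rcases le_total u v with huv | huv
  · exact main N le_rfl u v hu' hv' huv
  · have := main N le_rfl v u hv' hu' huv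
    rw [abs_sub_comm (r v) (r u), abs_sub_comm v u] at this
    exact this
end

section
/- Let f belong to H^α([−1,1],K) and let r_N = S_N − f be the spline interpolation error. Then r_N satisfies the Hölder condition |r_N(t) − r_N(t′)| ≤ 2^{2−α}·K·|t − t′|^α for all t, t′ ∈ [−1,1]. -/
open Real MeasureTheory Filter Topology

lemma aux_pow_add (x y α : ℝ) (hx : 0 ≤ x) (hy : 0 ≤ y) (hα : 0 < α) (hα1 : α ≤ 1) :
    x ^ α + y ^ α ≤ 2 ^ (1 - α) * (x + y) ^ α := by
  have h := (Real.concaveOn_rpow hα.le hα1).2 (Set.mem_Ici.2 hx) (Set.mem_Ici.2 hy)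
    (by norm_num : (0:ℝ) ≤ 1/2) (by norm_num : (0:ℝ) ≤ 1/2) (by norm_num)
  simp only [smul_eq_mul] at h
  have h2 : ((1:ℝ)/2 * x + 1/2 * y) = (x + y)/2 := by ring
  rw [h2] at h
  have h3 : ((x+y)/2) ^ α = (x+y)^α / 2^α := Real.div_rpow (by linarith) (by norm_num) α
  have h4 : (2:ℝ) ^ (1-α) = 2 / 2^α := by
    rw [Real.rpow_sub (by norm_num), Real.rpow_one]
  rw [h3] at h
  rw [h4]
  have h5 : (0:ℝ) < 2^α := Real.rpow_pos_of_pos (by norm_num) _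
  have h6 := mul_le_mul_of_nonneg_right h h5.le
  rw [div_mul_cancel₀ _ h5.ne'] at h6
  rw [div_mul_eq_mul_div, mul_comm, le_div_iff₀ h5]
  nlinarith

lemma aux_same_interval (a b : ℝ) (hab : a < b) (f S : ℝ → ℝ) (K α : ℝ)
    (hα : 0 < α) (hα1 : α ≤ 1) (hK : 0 ≤ K)
    (hfx : ∀ x ∈ Set.Icc a b, ∀ y ∈ Set.Icc a b, |f x - f y| ≤ K * |x - y| ^ α)
    (hS : ∀ u ∈ Set.Icc a b, S u = ((b - u) * f a + (u - a) * f b) / (b - a))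
    (x : ℝ) (hx : x ∈ Set.Icc a b) (y : ℝ) (hy : y ∈ Set.Icc a b) :
    |(S x - f x) - (S y - f y)| ≤ 2 * K * |x - y| ^ α := by
  rcases eq_or_ne x y with rfl | hne
  · simp only [sub_self, abs_zero]
    positivity
  have hh : 0 < b - a := sub_pos.2 hab
  have hd : 0 < |x - y| := abs_pos.2 (sub_ne_zero.2 hne)
  set d := |x - y| with hdd
  have hdh : d ≤ b - a := by
    rw [hdd, abs_sub_le_iff]
    constructor <;> [linarith [hx.2, hy.1]; linarith [hy.2, hx.1]]
  -- bound on |S x - S y|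
  have hSxy : S x - S y = (x - y) * (f b - f a) / (b - a) := by
    rw [hS x hx, hS y hy]
    field_simp
    ring
  have hfab : |f b - f a| ≤ K * (b - a) ^ α := by
    have := hfx b ⟨hab.le, le_rfl⟩ a ⟨le_rfl, hab.le⟩
    rwa [abs_of_pos hh] at this
  have habs : |S x - S y| = d * |f b - f a| / (b - a) := by
    rw [hSxy, abs_div, abs_mul, abs_of_pos hh]
  -- d ≤ d^α * (b-a)^(1-α)
  have hd1 : d = d ^ α * d ^ (1 - α) := by
    rw [← Real.rpow_add hd]
    norm_num
  have hd2 : d ^ (1 - α) ≤ (b - a) ^ (1 - α) :=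
    Real.rpow_le_rpow hd.le hdh (by linarith)
  have hd3 : d ≤ d ^ α * (b - a) ^ (1 - α) := by
    nth_rewrite 1 [hd1]
    exact mul_le_mul_of_nonneg_left hd2 (Real.rpow_nonneg hd.le α)
  have hba : (b - a) ^ (1 - α) * (b - a) ^ α = b - a := by
    rw [← Real.rpow_add hh]
    norm_num
  have hSb : |S x - S y| ≤ K * d ^ α := by
    rw [habs]
    have step1 : d * |f b - f a| / (b - a) ≤ d * (K * (b - a) ^ α) / (b - a) := by
      gcongr
    refine step1.trans ?_
    have step2 : d * (K * (b - a) ^ α) / (b - a) ≤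
        (d ^ α * (b - a) ^ (1 - α)) * (K * (b - a) ^ α) / (b - a) := by
      gcongr
    refine step2.trans (le_of_eq ?_)
    have : (d ^ α * (b - a) ^ (1 - α)) * (K * (b - a) ^ α) / (b - a)
        = K * d ^ α * (((b - a) ^ (1 - α) * (b - a) ^ α) / (b - a)) := by ring
    rw [this, hba, div_self hh.ne', mul_one]
  have hfb : |f x - f y| ≤ K * d ^ α := hfx x hx y hy
  have htri : |(S x - f x) - (S y - f y)| ≤ |S x - S y| + |f x - f y| := by
    have : (S x - f x) - (S y - f y) = (S x - S y) - (f x - f y) := by ring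
    rw [this]
    exact abs_sub _ _
  calc |(S x - f x) - (S y - f y)| ≤ |S x - S y| + |f x - f y| := htri
    _ ≤ K * d ^ α + K * d ^ α := add_le_add hSb hfb
    _ = 2 * K * d ^ α := by ring

theorem spline_remainder_holder_Halpha
    (N : ℕ) (hN : 1 ≤ N)
    (t : ℕ → ℝ) (ht0 : t 0 = -1) (htN : t N = 1)
    (hmono : ∀ k, k < N → t k < t (k + 1))
    (f S : ℝ → ℝ) (K α : ℝ) (hα : 0 < α) (hα1 : α ≤ 1) (hK : 0 < K)
    (hf : ∀ u ∈ Set.Icc (-1 : ℝ) 1, ∀ v ∈ Set.Icc (-1 : ℝ) 1,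
      |f u - f v| ≤ K * |u - v| ^ α)
    (hS : ∀ k, k < N → ∀ u ∈ Set.Icc (t k) (t (k + 1)),
      S u = ((t (k + 1) - u) * f (t k) + (u - t k) * f (t (k + 1))) / (t (k + 1) - t k))
    (u : ℝ) (hu : u ∈ Set.Icc (-1 : ℝ) 1) (v : ℝ) (hv : v ∈ Set.Icc (-1 : ℝ) 1) :
    |(S u - f u) - (S v - f v)| ≤ 2 ^ (2 - α) * K * |u - v| ^ α := by
  -- monotonicity of the grid
  have gen : ∀ d i, i + d ≤ N → t i ≤ t (i + d) := by
    intro d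
    induction d with
    | zero => intro i _; simp
    | succ n ih =>
      intro i h
      have h1 : t i ≤ t (i + n) := ih i (by omega)
      have h2 : t (i + n) < t (i + n + 1) := hmono (i + n) (by omega)
      have h3 : i + (n + 1) = i + n + 1 := by omega
      rw [h3]
      linarith
  have tmono : ∀ i j, i ≤ j → j ≤ N → t i ≤ t j := by
    intro i j hij hjN
    obtain ⟨d, rfl⟩ := Nat.exists_eq_add_of_le hij
    exact gen d i hjN
  have trange : ∀ k, k ≤ N → t k ∈ Set.Icc (-1 : ℝ) 1 := by
    intro k hk
    exact ⟨ht0 ▸ tmono 0 k (Nat.zero_le _) hk, htN ▸ tmono k N hk le_rfl⟩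
  have hsub : ∀ k, k < N → Set.Icc (t k) (t (k + 1)) ⊆ Set.Icc (-1 : ℝ) 1 := by
    intro k hk
    exact Set.Icc_subset_Icc (trange k hk.le).1 (trange (k + 1) hk).2
  -- key one-interval bound
  have key1 : ∀ k, k < N → ∀ x ∈ Set.Icc (t k) (t (k + 1)), ∀ y ∈ Set.Icc (t k) (t (k + 1)),
      |(S x - f x) - (S y - f y)| ≤ 2 * K * |x - y| ^ α := by
    intro k hk x hx y hy
    exact aux_same_interval (t k) (t (k + 1)) (hmono k hk) f S K α hα hα1 hK.le
      (fun a ha b hb => hf a (hsub k hk ha) b (hsub k hk hb)) (hS k hk) x hx y hy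
  -- locating points in the grid
  have find : ∀ x : ℝ, -1 ≤ x → x ≤ 1 → ∃ k, k < N ∧ t k ≤ x ∧ x ≤ t (k + 1) := by
    intro x hx1 hx2
    have h0 : t 0 ≤ x := by rw [ht0]; exact hx1
    have main : ∀ m, 1 ≤ m → m ≤ N → x ≤ t m → ∃ k, k < m ∧ t k ≤ x ∧ x ≤ t (k + 1) := by
      intro m
      induction m with
      | zero => intro h; omega
      | succ n ih =>
        intro _ hmN hxm
        rcases Nat.eq_zero_or_pos n with hn | hn
        · subst hn
          exact ⟨0, by omega, h0, hxm⟩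
        · by_cases hx : x ≤ t n
          · obtain ⟨k, hk, h1, h2⟩ := ih hn (by omega) hx
            exact ⟨k, by omega, h1, h2⟩
          · exact ⟨n, by omega, (not_le.1 hx).le, hxm⟩
    exact main N hN le_rfl (by rw [htN]; exact hx2)
  -- 2 ^ (2-α) facts
  have h2a : (2:ℝ) ^ (2 - α) = 2 * 2 ^ (1 - α) := by
    rw [show (2:ℝ) - α = 1 + (1 - α) by ring, Real.rpow_add (by norm_num), Real.rpow_one]
  have h2le : (2:ℝ) ≤ 2 ^ (2 - α) := by
    nth_rewrite 1 [show (2:ℝ) = 2 ^ (1:ℝ) by rw [Real.rpow_one]]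
    exact Real.rpow_le_rpow_of_exponent_le (by norm_num) (by linarith)
  -- main ordered case
  have main : ∀ (x y : ℝ) (k j : ℕ), k < N → j < N → t k ≤ x → x ≤ t (k + 1) →
      t j ≤ y → y ≤ t (j + 1) → x ≤ y →
      |(S x - f x) - (S y - f y)| ≤ 2 ^ (2 - α) * K * |x - y| ^ α := by
    intro x y k j hkN hjN hx1 hx2 hy1 hy2 hxy
    rcases Nat.lt_or_ge k j with hkj | hjk
    · -- different intervals
      set a := t (k + 1) with ha
      set b := t j with hb
      have hab : a ≤ b := tmono (k + 1) j hkj hjN.le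
      have hka : 0 < t (k + 1) - t k := sub_pos.2 (hmono k hkN)
      have hjb : 0 < t (j + 1) - t j := sub_pos.2 (hmono j hjN)
      have ra0 : S a - f a = 0 := by
        have := hS k hkN a ⟨(hmono k hkN).le, le_rfl⟩
        rw [this]
        field_simp
        ring
      have rb0 : S b - f b = 0 := by
        have := hS j hjN b ⟨le_rfl, (hmono j hjN).le⟩
        rw [this]
        field_simp
        ring
      have bu : |S x - f x| ≤ 2 * K * (a - x) ^ α := by
        have := key1 k hkN x ⟨hx1, hx2⟩ a ⟨(hmono k hkN).le, le_rfl⟩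
        rwa [ra0, sub_zero, abs_of_nonpos (by linarith : x - a ≤ 0), neg_sub] at this
      have bv : |S y - f y| ≤ 2 * K * (y - b) ^ α := by
        have := key1 j hjN y ⟨hy1, hy2⟩ b ⟨le_rfl, (hmono j hjN).le⟩
        rwa [rb0, sub_zero, abs_of_nonneg (by linarith : 0 ≤ y - b)] at this
      have hax : 0 ≤ a - x := by linarith
      have hyb : 0 ≤ y - b := by linarith
      have hsum := aux_pow_add (a - x) (y - b) α hax hyb hα hα1
      have hmon : ((a - x) + (y - b)) ^ α ≤ (y - x) ^ α :=
        Real.rpow_le_rpow (by linarith) (by linarith) hα.le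
      have habsxy : |x - y| = y - x := by
        rw [abs_of_nonpos (by linarith), neg_sub]
      calc |(S x - f x) - (S y - f y)| ≤ |S x - f x| + |S y - f y| := abs_sub _ _
        _ ≤ 2 * K * (a - x) ^ α + 2 * K * (y - b) ^ α := add_le_add bu bv
        _ = 2 * K * ((a - x) ^ α + (y - b) ^ α) := by ring
        _ ≤ 2 * K * (2 ^ (1 - α) * ((a - x) + (y - b)) ^ α) := by
            apply mul_le_mul_of_nonneg_left hsum (by positivity)
        _ ≤ 2 * K * (2 ^ (1 - α) * (y - x) ^ α) := by
            apply mul_le_mul_of_nonneg_left _ (by positivity)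
            exact mul_le_mul_of_nonneg_left hmon (by positivity)
        _ = 2 ^ (2 - α) * K * |x - y| ^ α := by rw [h2a, habsxy]; ring
    · rcases Nat.lt_or_ge j k with hjk' | hkj'
      · -- j < k : forces x = y
        have h1 : t (j + 1) ≤ t k := tmono (j + 1) k hjk' hkN.le
        have hxy2 : x = y := le_antisymm hxy (by linarith)
        rw [hxy2]
        simp only [sub_self, abs_zero]
        positivity
      · -- k = j : same interval
        have hkj2 : k = j := le_antisymm hkj' hjk
        subst hkj2
        have := key1 k hkN x ⟨hx1, hx2⟩ y ⟨hy1, hy2⟩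
        refine this.trans ?_
        have : 0 ≤ K * |x - y| ^ α := by positivity
        nlinarith
  rcases le_total u v with huv | huv
  · exact main u v _ _ (find u hu.1 hu.2).choose_spec.1 (find v hv.1 hv.2).choose_spec.1
      (find u hu.1 hu.2).choose_spec.2.1 (find u hu.1 hu.2).choose_spec.2.2
      (find v hv.1 hv.2).choose_spec.2.1 (find v hv.1 hv.2).choose_spec.2.2 huv
  · rw [abs_sub_comm (S u - f u), abs_sub_comm u v]
    exact main v u _ _ (find v hv.1 hv.2).choose_spec.1 (find u hu.1 hu.2).choose_spec.1
      (find v hv.1 hv.2).choose_spec.2.1 (find v hv.1 hv.2).choose_spec.2.2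
      (find u hu.1 hu.2).choose_spec.2.1 (find u hu.1 hu.2).choose_spec.2.2 huv
end
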